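/- arXiv:2601.01923 — 9 statements merged into one kernel-verified Lean document; each statement's English description precedes it below -/
import Mathlib

section
/- Let L > 0 and let u be a classical solution of the projected sinh-Gordon equation (C², L-periodic in x, with zero spatial mean). If the initial energy satisfies E(0) = (1/2)∫₀^L [u_x(x,0)² + u_t(x,0)² − 2(cosh(u(x,0)) − 1)] dx < 0, then sup_{t ≥ 0} ∫₀^L u(x,t)² dx = +∞. -/
open Real MeasureTheory Function Set

section helpers

lemma slice_cont {F : ℝ → ℝ → ℝ} (h : Continuous (uncurry F)) (t : ℝ) :
    Continuous (fun x => F x t) :=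
  h.comp (continuous_id.prodMk continuous_const)

lemma slice_cont' {F : ℝ → ℝ → ℝ} (h : Continuous (uncurry F)) (x : ℝ) :
    Continuous (fun s => F x s) :=
  h.comp (continuous_const.prodMk continuous_id)

/-- Differentiation under the interval integral, continuous version. -/
lemma hasDerivAt_param {F F' : ℝ → ℝ → ℝ} (hF : Continuous (uncurry F))
    (hF' : Continuous (uncurry F'))
    (hd : ∀ x s, HasDerivAt (fun s' => F x s') (F' x s) s) (a b t : ℝ) :
    HasDerivAt (fun s => ∫ x in a..b, F x s) (∫ x in a..b, F' x t) t := by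
  obtain ⟨C, hC⟩ : ∃ C, ∀ p ∈ (Set.uIcc a b ×ˢ Set.Icc (t-1) (t+1)),
      ‖uncurry F' p‖ ≤ C :=
    (isCompact_uIcc.prod isCompact_Icc).exists_bound_of_continuousOn hF'.continuousOn
  have key := intervalIntegral.hasDerivAt_integral_of_dominated_loc_of_deriv_le
    (F := fun s x => F x s) (F' := fun s x => F' x s) (x₀ := t) (a := a) (b := b)
    (bound := fun _ => C) (μ := volume) (s := Metric.ball t 1) (Metric.ball_mem_nhds t one_pos)
    (Filter.Eventually.of_forall fun s => ((slice_cont hF s).aestronglyMeasurable))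
    ((slice_cont hF t).intervalIntegrable a b)
    ((slice_cont hF' t).aestronglyMeasurable)
    (Filter.Eventually.of_forall fun x hx => fun s hs => by
      refine hC (x, s) ⟨?_, ?_⟩
      · exact Set.uIoc_subset_uIcc hx
      · have := Metric.mem_ball.1 hs
        rw [Real.dist_eq] at this
        constructor <;> [linarith [abs_lt.1 this]; linarith [(abs_lt.1 this).2]])
    (intervalIntegrable_const)
    (Filter.Eventually.of_forall fun x _ => fun s _ => hd x s)
  exact key.2

lemma sinh_le_mul_cosh {y : ℝ} (hy : 0 ≤ y) : Real.sinh y ≤ y * Real.cosh y := by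
  have h : MonotoneOn (fun y => y * Real.cosh y - Real.sinh y) (Ici 0) := by
    apply monotoneOn_of_deriv_nonneg (convex_Ici 0)
    · exact ((continuous_id.mul Real.continuous_cosh).sub Real.continuous_sinh).continuousOn
    · intro x hx
      exact (((differentiable_id.mul Real.differentiable_cosh).sub
        Real.differentiable_sinh) x).differentiableWithinAt
    · intro x hx
      rw [interior_Ici] at hx
      have hD : HasDerivAt (fun y => y * Real.cosh y - Real.sinh y)
          (1 * Real.cosh x + x * Real.sinh x - Real.cosh x) x :=
        ((hasDerivAt_id x).mul (Real.hasDerivAt_cosh x)).sub (Real.hasDerivAt_sinh x)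
      rw [hD.deriv]
      have : 0 ≤ x * Real.sinh x := mul_nonneg hx.le (Real.sinh_nonneg_iff.2 hx.le)
      linarith
  have := h (self_mem_Ici (a := (0:ℝ))) (mem_Ici.2 hy) hy
  simp at this
  linarith

lemma two_cosh_sub_one_le (x : ℝ) : 2 * (Real.cosh x - 1) ≤ x * Real.sinh x := by
  set y := x/2 with hy
  have hxy : x = 2*y := by rw [hy]; ring
  have hs : x * Real.sinh x = 4 * (y * (Real.sinh y * Real.cosh y)) := by
    rw [hxy, Real.sinh_two_mul]; ring
  have hc : Real.cosh x = 2 * Real.cosh y^2 - 1 := by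
    rw [hxy, Real.cosh_two_mul]; nlinarith [Real.cosh_sq y]
  have hcs : Real.cosh y ^ 2 = Real.sinh y ^2 + 1 := Real.cosh_sq y
  have key : 0 ≤ Real.sinh y * (y * Real.cosh y - Real.sinh y) := by
    rcases le_or_gt 0 y with h | h
    · exact mul_nonneg (Real.sinh_nonneg_iff.2 h) (by linarith [sinh_le_mul_cosh h])
    · have h1 : Real.sinh (-y) ≤ (-y) * Real.cosh (-y) := sinh_le_mul_cosh (by linarith)
      rw [Real.sinh_neg, Real.cosh_neg] at h1
      have h2 : Real.sinh y ≤ 0 := Real.sinh_nonpos_iff.2 h.le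
      nlinarith
  nlinarith [key, hcs, hs, hc]

noncomputable def Ut (u : ℝ → ℝ → ℝ) (x t : ℝ) : ℝ := fderiv ℝ (uncurry u) (x,t) (0,1)
noncomputable def Ux (u : ℝ → ℝ → ℝ) (x t : ℝ) : ℝ := fderiv ℝ (uncurry u) (x,t) (1,0)

lemma hasDerivAt_Ut {u : ℝ → ℝ → ℝ} (h : ContDiff ℝ 1 (uncurry u)) (x t : ℝ) :
    HasDerivAt (fun s => u x s) (Ut u x t) t := by
  have h1 : HasFDerivAt (uncurry u) (fderiv ℝ (uncurry u) (x,t)) (x,t) :=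
    (h.differentiable one_ne_zero (x,t)).hasFDerivAt
  have h2 : HasDerivAt (fun s : ℝ => ((x:ℝ), s)) ((0:ℝ),(1:ℝ)) t :=
    (hasDerivAt_const t x).prodMk (hasDerivAt_id t)
  exact h1.comp_hasDerivAt t h2

lemma hasDerivAt_Ux {u : ℝ → ℝ → ℝ} (h : ContDiff ℝ 1 (uncurry u)) (x t : ℝ) :
    HasDerivAt (fun y => u y t) (Ux u x t) x := by
  have h1 : HasFDerivAt (uncurry u) (fderiv ℝ (uncurry u) (x,t)) (x,t) :=
    (h.differentiable one_ne_zero (x,t)).hasFDerivAt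
  have h2 : HasDerivAt (fun y : ℝ => (y, t)) ((1:ℝ),(0:ℝ)) x :=
    (hasDerivAt_id x).prodMk (hasDerivAt_const x t)
  exact h1.comp_hasDerivAt x h2

lemma contDiff_Ut {u : ℝ → ℝ → ℝ} (h : ContDiff ℝ 2 (uncurry u)) :
    ContDiff ℝ 1 (uncurry (Ut u)) := by
  have h1 : ContDiff ℝ 1 (fderiv ℝ (uncurry u)) := h.fderiv_right (by norm_num)
  exact ((ContinuousLinearMap.apply ℝ ℝ ((0:ℝ),(1:ℝ))).contDiff).comp h1

lemma contDiff_Ux {u : ℝ → ℝ → ℝ} (h : ContDiff ℝ 2 (uncurry u)) :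
    ContDiff ℝ 1 (uncurry (Ux u)) := by
  have h1 : ContDiff ℝ 1 (fderiv ℝ (uncurry u)) := h.fderiv_right (by norm_num)
  exact ((ContinuousLinearMap.apply ℝ ℝ ((1:ℝ),(0:ℝ))).contDiff).comp h1

lemma continuous_Ut {u : ℝ → ℝ → ℝ} (h : ContDiff ℝ 1 (uncurry u)) :
    Continuous (uncurry (Ut u)) := by
  have h1 : ContDiff ℝ 0 (fderiv ℝ (uncurry u)) := h.fderiv_right (by norm_num)
  exact ((((ContinuousLinearMap.apply ℝ ℝ ((0:ℝ),(1:ℝ))).contDiff (n := 0)).comp h1)).continuous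

lemma continuous_Ux {u : ℝ → ℝ → ℝ} (h : ContDiff ℝ 1 (uncurry u)) :
    Continuous (uncurry (Ux u)) := by
  have h1 : ContDiff ℝ 0 (fderiv ℝ (uncurry u)) := h.fderiv_right (by norm_num)
  exact ((((ContinuousLinearMap.apply ℝ ℝ ((1:ℝ),(0:ℝ))).contDiff (n := 0)).comp h1)).continuous

/-- mixed partials symmetry : ∂ₜ(Ux) = ∂ₓ(Ut) -/
lemma mixed_symm {u : ℝ → ℝ → ℝ} (h : ContDiff ℝ 2 (uncurry u)) (x t : ℝ) :
    Ut (Ux u) x t = Ux (Ut u) x t := by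
  have hdf : DifferentiableAt ℝ (fderiv ℝ (uncurry u)) (x,t) :=
    (h.fderiv_right (m := 1) (by norm_num)).differentiable one_ne_zero (x,t)
  have e1 : uncurry (Ux u) = (ContinuousLinearMap.apply ℝ ℝ ((1:ℝ),(0:ℝ))) ∘
      (fderiv ℝ (uncurry u)) := rfl
  have e2 : uncurry (Ut u) = (ContinuousLinearMap.apply ℝ ℝ ((0:ℝ),(1:ℝ))) ∘
      (fderiv ℝ (uncurry u)) := rfl
  have hsymm := (h.contDiffAt (x := (x,t))).isSymmSndFDerivAt (by simp [minSmoothness_of_isRCLikeNormedField])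
  have c1 : fderiv ℝ (uncurry (Ux u)) (x,t) =
      (ContinuousLinearMap.apply ℝ ℝ ((1:ℝ),(0:ℝ))).comp
        (fderiv ℝ (fderiv ℝ (uncurry u)) (x,t)) := by
    rw [e1, fderiv_comp (x,t)
      (ContinuousLinearMap.apply ℝ ℝ ((1:ℝ),(0:ℝ))).differentiableAt hdf,
      ContinuousLinearMap.fderiv]
  have c2 : fderiv ℝ (uncurry (Ut u)) (x,t) =
      (ContinuousLinearMap.apply ℝ ℝ ((0:ℝ),(1:ℝ))).comp
        (fderiv ℝ (fderiv ℝ (uncurry u)) (x,t)) := by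
    rw [e2, fderiv_comp (x,t)
      (ContinuousLinearMap.apply ℝ ℝ ((0:ℝ),(1:ℝ))).differentiableAt hdf,
      ContinuousLinearMap.fderiv]
  show fderiv ℝ (uncurry (Ux u)) (x,t) (0,1) = fderiv ℝ (uncurry (Ut u)) (x,t) (1,0)
  rw [c1, c2]
  exact hsymm (0,1) (1,0)

end helpers

/-- Blow-up for the projected sinh-Gordon equation: if the initial energy is
negative, the `L²` norm of the solution is unbounded in time. -/
theorem sinhGordon_blowup
    (L : ℝ) (hL : 0 < L)
    (u : ℝ → ℝ → ℝ)
    (hreg : ContDiff ℝ 2 (Function.uncurry u))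
    (hper : ∀ x t : ℝ, u (x + L) t = u x t)
    (hmean : ∀ t : ℝ, 0 ≤ t → (∫ x in (0:ℝ)..L, u x t) = 0)
    (hpde : ∀ x t : ℝ, 0 ≤ t →
      deriv (deriv (fun s => u x s)) t
        - deriv (deriv (fun y => u y t)) x
        - Real.sinh (u x t)
        + (1 / L) * ∫ y in (0:ℝ)..L, Real.sinh (u y t) = 0)
    (hE0 : (1/2) * (∫ x in (0:ℝ)..L,
        ((deriv (fun y => u y 0) x)^2 + (deriv (fun s => u x s) 0)^2
          - 2 * (Real.cosh (u x 0) - 1))) < 0) :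
    ∀ C : ℝ, ∃ t : ℝ, 0 ≤ t ∧ C < ∫ x in (0:ℝ)..L, (u x t)^2 := by
  intro C
  have hreg1 : ContDiff ℝ 1 (Function.uncurry u) := hreg.of_le (by norm_num)
  have cu : Continuous (Function.uncurry u) := hreg.continuous
  have hUt1 : ContDiff ℝ 1 (uncurry (Ut u)) := contDiff_Ut hreg
  have hUx1 : ContDiff ℝ 1 (uncurry (Ux u)) := contDiff_Ux hreg
  have cut : Continuous (uncurry (Ut u)) := hUt1.continuous
  have cux : Continuous (uncurry (Ux u)) := hUx1.continuous
  have cutt : Continuous (uncurry (Ut (Ut u))) := continuous_Ut hUt1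
  have cuxx : Continuous (uncurry (Ux (Ux u))) := continuous_Ux hUx1
  have cuxt : Continuous (uncurry (Ut (Ux u))) := continuous_Ut hUx1
  have cutx : Continuous (uncurry (Ux (Ut u))) := continuous_Ux hUt1
  -- identifications of derivatives appearing in the statement
  have dut : ∀ x t, deriv (fun s => u x s) t = Ut u x t :=
    fun x t => (hasDerivAt_Ut hreg1 x t).deriv
  have dux : ∀ x t, deriv (fun y => u y t) x = Ux u x t :=
    fun x t => (hasDerivAt_Ux hreg1 x t).deriv
  have dutt : ∀ x t, deriv (deriv (fun s => u x s)) t = Ut (Ut u) x t := by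
    intro x t
    have h : deriv (fun s => u x s) = fun s => Ut u x s := funext fun s => dut x s
    rw [h]; exact (hasDerivAt_Ut hUt1 x t).deriv
  have duxx : ∀ x t, deriv (deriv (fun y => u y t)) x = Ux (Ux u) x t := by
    intro x t
    have h : deriv (fun y => u y t) = fun y => Ux u y t := funext fun y => dux y t
    rw [h]; exact (hasDerivAt_Ux hUx1 x t).deriv
  -- the PDE in terms of Ut/Ux
  have hpde' : ∀ x t, 0 ≤ t → Ut (Ut u) x t =
      Ux (Ux u) x t + Real.sinh (u x t)
        - (1/L) * ∫ y in (0:ℝ)..L, Real.sinh (u y t) := by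
    intro x t ht
    have h := hpde x t ht
    rw [dutt, duxx] at h
    linarith
  -- periodicity of u, Ux, Ut in x
  have perU : ∀ t, u L t = u 0 t := fun t => by simpa using hper 0 t
  have perUx : ∀ t, Ux u L t = Ux u 0 t := by
    intro t
    have h1 : deriv (fun y => u (y + L) t) 0 = deriv (fun y => u y t) (0 + L) :=
      deriv_comp_add_const (fun y => u y t) L 0
    rw [zero_add] at h1
    have h2 : (fun y : ℝ => u (y + L) t) = fun y => u y t := funext fun y => hper y t
    rw [h2] at h1
    rw [← dux L t, ← dux 0 t]
    exact h1.symm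
  have perUt : ∀ t, Ut u L t = Ut u 0 t := by
    intro t
    have h : (fun s => u L s) = (fun s => u 0 s) := funext fun s => by
      simpa using hper 0 s
    rw [← dut L t, ← dut 0 t, h]
  -- ∫ Ut = 0 on [0,∞)
  have hQder : ∀ t : ℝ, HasDerivAt (fun s => ∫ x in (0:ℝ)..L, u x s)
      (∫ x in (0:ℝ)..L, Ut u x t) t :=
    fun t => hasDerivAt_param cu cut (fun x s => hasDerivAt_Ut hreg1 x s) 0 L t
  have hQpos : ∀ t : ℝ, 0 < t → (∫ x in (0:ℝ)..L, Ut u x t) = 0 := by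
    intro t ht
    have hev : (fun s => ∫ x in (0:ℝ)..L, u x s) =ᶠ[nhds t] (fun _ => 0) :=
      Filter.eventually_of_mem (Ioi_mem_nhds ht) (fun s hs => hmean s (le_of_lt hs))
    have h0 : HasDerivAt (fun s => ∫ x in (0:ℝ)..L, u x s) 0 t :=
      (hasDerivAt_const t (0:ℝ)).congr_of_eventuallyEq hev
    exact (hQder t).unique h0
  have hQcont : Continuous fun t => ∫ x in (0:ℝ)..L, Ut u x t := by
    apply intervalIntegral.continuous_parametric_intervalIntegral_of_continuous'
      (f := fun t x => Ut u x t)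
    exact cut.comp continuous_swap
  have hQ0 : ∀ t : ℝ, 0 ≤ t → (∫ x in (0:ℝ)..L, Ut u x t) = 0 := by
    intro t ht
    rcases ht.eq_or_lt with h | h
    · have h1 : Filter.Tendsto (fun s => ∫ x in (0:ℝ)..L, Ut u x s)
          (nhdsWithin 0 (Ioi 0)) (nhds (∫ x in (0:ℝ)..L, Ut u x 0)) :=
        (hQcont.continuousAt).continuousWithinAt
      have h2 : Filter.Tendsto (fun s => ∫ x in (0:ℝ)..L, Ut u x s)
          (nhdsWithin 0 (Ioi 0)) (nhds 0) := by
        apply Filter.Tendsto.congr' _ tendsto_const_nhds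
        exact Filter.eventually_of_mem self_mem_nhdsWithin
          (fun s hs => (hQpos s hs).symm)
      rw [← h]
      exact tendsto_nhds_unique h1 h2
    · exact hQpos t h
  -- FTC boundary computations at any time t
  have ftc1 : ∀ t : ℝ, (∫ x in (0:ℝ)..L,
      (2:ℝ) * (Ux (Ux u) x t * Ut u x t + Ux u x t * Ux (Ut u) x t)) = 0 := by
    intro t
    have prodDer : ∀ x : ℝ, HasDerivAt (fun y => 2 * (Ux u y t * Ut u y t))
        (2 * (Ux (Ux u) x t * Ut u x t + Ux u x t * Ux (Ut u) x t)) x :=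
      fun x => ((hasDerivAt_Ux hUx1 x t).mul (hasDerivAt_Ux hUt1 x t)).const_mul 2
    rw [intervalIntegral.integral_eq_sub_of_hasDerivAt (fun x _ => prodDer x)
      ((continuous_const.mul (((slice_cont cuxx t).mul (slice_cont cut t)).add
        ((slice_cont cux t).mul (slice_cont cutx t)))).intervalIntegrable _ _)]
    rw [perUx, perUt]
    ring
  have ftc2 : ∀ t : ℝ, (∫ x in (0:ℝ)..L,
      ((2:ℝ) * (Ux u x t * Ux u x t) + 2 * (u x t * Ux (Ux u) x t))) = 0 := by
    intro t
    have prodDer : ∀ x : ℝ, HasDerivAt (fun y => 2 * (u y t * Ux u y t))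
        (2 * (Ux u x t * Ux u x t) + 2 * (u x t * Ux (Ux u) x t)) x := by
      intro x
      have := ((hasDerivAt_Ux hreg1 x t).mul (hasDerivAt_Ux hUx1 x t)).const_mul
        (2:ℝ)
      refine this.congr_deriv ?_
      ring
    rw [intervalIntegral.integral_eq_sub_of_hasDerivAt (fun x _ => prodDer x)
      (((continuous_const.mul ((slice_cont cux t).mul (slice_cont cux t))).add
        (continuous_const.mul ((slice_cont cu t).mul (slice_cont cuxx t)))).intervalIntegrable _ _)]
    rw [perU, perUx]
    ring
  -- energy conservation
  have hEder : ∀ t : ℝ, HasDerivAt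
      (fun s => ∫ x in (0:ℝ)..L,
        ((Ux u x s)^2 + (Ut u x s)^2 - 2 * (Real.cosh (u x s) - 1)))
      (∫ x in (0:ℝ)..L,
        (2 * (Ux u x t * Ut (Ux u) x t) + 2 * (Ut u x t * Ut (Ut u) x t)
          - 2 * (Real.sinh (u x t) * Ut u x t))) t := by
    intro t
    apply hasDerivAt_param
      (F := fun x s => (Ux u x s)^2 + (Ut u x s)^2 - 2 * (Real.cosh (u x s) - 1))
      (F' := fun x s => 2 * (Ux u x s * Ut (Ux u) x s) + 2 * (Ut u x s * Ut (Ut u) x s)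
          - 2 * (Real.sinh (u x s) * Ut u x s))
    · exact ((cux.pow 2).add (cut.pow 2)).sub
        (continuous_const.mul ((Real.continuous_cosh.comp cu).sub continuous_const))
    · exact (((continuous_const.mul (cux.mul cuxt)).add
        (continuous_const.mul (cut.mul cutt))).sub
        (continuous_const.mul ((Real.continuous_sinh.comp cu).mul cut)))
    · intro x s
      have h1 : HasDerivAt (fun s' => (Ux u x s')^2)
          (2 * (Ux u x s * Ut (Ux u) x s)) s := by
        have := (hasDerivAt_Ut hUx1 x s).pow 2
        refine this.congr_deriv ?_
        push_cast
        ring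
      have h2 : HasDerivAt (fun s' => (Ut u x s')^2)
          (2 * (Ut u x s * Ut (Ut u) x s)) s := by
        have := (hasDerivAt_Ut hUt1 x s).pow 2
        refine this.congr_deriv ?_
        push_cast
        ring
      have h3 : HasDerivAt (fun s' => 2 * (Real.cosh (u x s') - 1))
          (2 * (Real.sinh (u x s) * Ut u x s)) s := by
        have := ((hasDerivAt_Ut hreg1 x s).cosh).sub_const 1
        exact this.const_mul 2
      exact (h1.add h2).sub h3
  have hDzero : ∀ t : ℝ, 0 ≤ t → (∫ x in (0:ℝ)..L,
      (2 * (Ux u x t * Ut (Ux u) x t) + 2 * (Ut u x t * Ut (Ut u) x t)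
        - 2 * (Real.sinh (u x t) * Ut u x t))) = 0 := by
    intro t ht
    have key : (∫ x in (0:ℝ)..L,
        (2 * (Ux u x t * Ut (Ux u) x t) + 2 * (Ut u x t * Ut (Ut u) x t)
          - 2 * (Real.sinh (u x t) * Ut u x t)))
        = (∫ x in (0:ℝ)..L,
            (2:ℝ) * (Ux (Ux u) x t * Ut u x t + Ux u x t * Ux (Ut u) x t))
          - (2 * ((1/L) * ∫ y in (0:ℝ)..L, Real.sinh (u y t)))
            * ∫ x in (0:ℝ)..L, Ut u x t := by
      rw [← intervalIntegral.integral_const_mul,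
        ← intervalIntegral.integral_sub
          (f := fun x => (2:ℝ) * (Ux (Ux u) x t * Ut u x t + Ux u x t * Ux (Ut u) x t))
          (g := fun x => 2 * ((1/L) * ∫ y in (0:ℝ)..L, Real.sinh (u y t)) * Ut u x t)
          ((continuous_const.mul (((slice_cont cuxx t).mul (slice_cont cut t)).add
            ((slice_cont cux t).mul (slice_cont cutx t)))).intervalIntegrable _ _)
          ((continuous_const.mul (slice_cont cut t)).intervalIntegrable _ _)]
      apply intervalIntegral.integral_congr
      intro x _
      have hp := hpde' x t ht
      have hm := mixed_symm hreg x t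
      simp only
      rw [hp, hm]
      ring
    rw [key, ftc1 t, hQ0 t ht]
    ring
  have hEconst : ∀ t : ℝ, 0 ≤ t →
      (∫ x in (0:ℝ)..L,
        ((Ux u x t)^2 + (Ut u x t)^2 - 2 * (Real.cosh (u x t) - 1)))
      = ∫ x in (0:ℝ)..L,
        ((Ux u x 0)^2 + (Ut u x 0)^2 - 2 * (Real.cosh (u x 0) - 1)) := by
    intro t ht
    have := constant_of_has_deriv_right_zero
      (f := fun s => ∫ x in (0:ℝ)..L,
        ((Ux u x s)^2 + (Ut u x s)^2 - 2 * (Real.cosh (u x s) - 1)))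
      (a := 0) (b := t)
      (fun y _ => (hEder y).continuousAt.continuousWithinAt)
      (fun y hy => by
        have h := hEder y
        rw [hDzero y hy.1] at h
        exact h.hasDerivWithinAt)
    exact this t (right_mem_Icc.2 ht)
  -- initial energy is negative
  have hE0' : (∫ x in (0:ℝ)..L,
      ((Ux u x 0)^2 + (Ut u x 0)^2 - 2 * (Real.cosh (u x 0) - 1))) < 0 := by
    have heq : (∫ x in (0:ℝ)..L,
        ((deriv (fun y => u y 0) x)^2 + (deriv (fun s => u x s) 0)^2
          - 2 * (Real.cosh (u x 0) - 1)))
        = ∫ x in (0:ℝ)..L,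
          ((Ux u x 0)^2 + (Ut u x 0)^2 - 2 * (Real.cosh (u x 0) - 1)) := by
      apply intervalIntegral.integral_congr
      intro x _
      simp only
      rw [dux, dut]
    rw [heq] at hE0
    linarith
  set E0 : ℝ := ∫ x in (0:ℝ)..L,
      ((Ux u x 0)^2 + (Ut u x 0)^2 - 2 * (Real.cosh (u x 0) - 1)) with hE0def
  set c : ℝ := -2 * E0 with hcdef
  have hc : 0 < c := by rw [hcdef]; linarith
  -- derivative of I(t) = ∫ u², and of I₁(t) = ∫ 2 u uₜ
  have hIder : ∀ t : ℝ, HasDerivAt (fun s => ∫ x in (0:ℝ)..L, (u x s)^2)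
      (∫ x in (0:ℝ)..L, 2 * (u x t * Ut u x t)) t := by
    intro t
    apply hasDerivAt_param (F := fun x s => (u x s)^2)
      (F' := fun x s => 2 * (u x s * Ut u x s))
    · exact cu.pow 2
    · exact continuous_const.mul (cu.mul cut)
    · intro x s
      have := (hasDerivAt_Ut hreg1 x s).pow 2
      refine this.congr_deriv ?_
      push_cast
      ring
  have hI1der : ∀ t : ℝ, HasDerivAt (fun s => ∫ x in (0:ℝ)..L, 2 * (u x s * Ut u x s))
      (∫ x in (0:ℝ)..L,
        2 * (Ut u x t * Ut u x t + u x t * Ut (Ut u) x t)) t := by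
    intro t
    apply hasDerivAt_param (F := fun x s => 2 * (u x s * Ut u x s))
      (F' := fun x s => 2 * (Ut u x s * Ut u x s + u x s * Ut (Ut u) x s))
    · exact continuous_const.mul (cu.mul cut)
    · exact continuous_const.mul ((cut.mul cut).add (cu.mul cutt))
    · intro x s
      exact ((hasDerivAt_Ut hreg1 x s).mul (hasDerivAt_Ut hUt1 x s)).const_mul 2
  -- lower bound on I₁'
  have hLB : ∀ t : ℝ, 0 ≤ t →
      c ≤ ∫ x in (0:ℝ)..L, 2 * (Ut u x t * Ut u x t + u x t * Ut (Ut u) x t) := by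
    intro t ht
    set A : ℝ := ∫ x in (0:ℝ)..L, Ut u x t * Ut u x t with hA
    set B : ℝ := ∫ x in (0:ℝ)..L, Ux u x t * Ux u x t with hB
    set K : ℝ := ∫ x in (0:ℝ)..L, (Real.cosh (u x t) - 1) with hK
    set S : ℝ := ∫ x in (0:ℝ)..L, u x t * Real.sinh (u x t) with hS
    have intA : IntervalIntegrable (fun x => Ut u x t * Ut u x t) volume 0 L :=
      ((slice_cont cut t).mul (slice_cont cut t)).intervalIntegrable 0 L
    have intB : IntervalIntegrable (fun x => Ux u x t * Ux u x t) volume 0 L :=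
      ((slice_cont cux t).mul (slice_cont cux t)).intervalIntegrable 0 L
    have intK : IntervalIntegrable (fun x => Real.cosh (u x t) - 1) volume 0 L :=
      ((Real.continuous_cosh.comp (slice_cont cu t)).sub continuous_const).intervalIntegrable 0 L
    have intS : IntervalIntegrable (fun x => u x t * Real.sinh (u x t)) volume 0 L :=
      ((slice_cont cu t).mul (Real.continuous_sinh.comp (slice_cont cu t))).intervalIntegrable 0 L
    have intUxx : IntervalIntegrable (fun x => u x t * Ux (Ux u) x t) volume 0 L :=
      ((slice_cont cu t).mul (slice_cont cuxx t)).intervalIntegrable 0 L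
    have intU : IntervalIntegrable (fun x => u x t) volume 0 L :=
      (slice_cont cu t).intervalIntegrable 0 L
    -- split the target integral after substituting the PDE
    have split1 : (∫ x in (0:ℝ)..L,
        2 * (Ut u x t * Ut u x t + u x t * Ut (Ut u) x t))
        = 2 * A + (2 * (∫ x in (0:ℝ)..L, u x t * Ux (Ux u) x t) + 2 * S
            - (2 * ((1/L) * ∫ y in (0:ℝ)..L, Real.sinh (u y t)))
              * ∫ x in (0:ℝ)..L, u x t) := by
      rw [hA]
      rw [← intervalIntegral.integral_const_mul (2:ℝ) (fun x => Ut u x t * Ut u x t),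
        ← intervalIntegral.integral_const_mul (2:ℝ) (fun x => u x t * Ux (Ux u) x t),
        ← intervalIntegral.integral_const_mul (2:ℝ) (fun x => u x t * Real.sinh (u x t)),
        ← intervalIntegral.integral_const_mul _ (fun x => u x t)]
      rw [← intervalIntegral.integral_add (intUxx.const_mul 2) (intS.const_mul 2),
        ← intervalIntegral.integral_sub ((intUxx.const_mul 2).add (intS.const_mul 2))
          (intU.const_mul _),
        ← intervalIntegral.integral_add (intA.const_mul 2) _]
      · apply intervalIntegral.integral_congr
        intro x _
        simp only
        rw [hpde' x t ht]
        ring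
      · exact ((intUxx.const_mul 2).add (intS.const_mul 2)).sub (intU.const_mul _)
    have hmean0 : (∫ x in (0:ℝ)..L, u x t) = 0 := hmean t ht
    -- ∫ u uxx = -B
    have e3 : (∫ x in (0:ℝ)..L, u x t * Ux (Ux u) x t) = -B := by
      have h := ftc2 t
      rw [intervalIntegral.integral_add (intB.const_mul 2) (intUxx.const_mul 2)] at h
      rw [intervalIntegral.integral_const_mul, intervalIntegral.integral_const_mul] at h
      rw [← hB] at h
      linarith
    -- energy split:  ∫(Ux² + Ut² - 2(cosh-1)) = B + A - 2K
    have e5 : (∫ x in (0:ℝ)..L,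
        ((Ux u x t)^2 + (Ut u x t)^2 - 2 * (Real.cosh (u x t) - 1)))
        = B + A - 2 * K := by
      have intB' : IntervalIntegrable (fun x => (Ux u x t)^2) volume 0 L :=
        ((slice_cont cux t).pow 2).intervalIntegrable 0 L
      have intA' : IntervalIntegrable (fun x => (Ut u x t)^2) volume 0 L :=
        ((slice_cont cut t).pow 2).intervalIntegrable 0 L
      rw [intervalIntegral.integral_sub (intB'.add intA') (intK.const_mul 2),
        intervalIntegral.integral_add intB' intA',
        intervalIntegral.integral_const_mul]
      have hBB : (∫ x in (0:ℝ)..L, (Ux u x t)^2) = B := by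
        rw [hB]; apply intervalIntegral.integral_congr; intro x _; simp only; ring
      have hAA : (∫ x in (0:ℝ)..L, (Ut u x t)^2) = A := by
        rw [hA]; apply intervalIntegral.integral_congr; intro x _; simp only; ring
      rw [hBB, hAA, ← hK]
    have hcons := hEconst t ht
    rw [e5] at hcons
    -- pointwise inequality integrated:  2K ≤ S
    have e4 : 2 * K ≤ S := by
      rw [hK, hS, ← intervalIntegral.integral_const_mul]
      apply intervalIntegral.integral_mono_on hL.le (intK.const_mul 2) intS
      intro x _
      exact two_cosh_sub_one_le (u x t)
    have hApos : 0 ≤ A := by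
      rw [hA]
      apply intervalIntegral.integral_nonneg hL.le
      intro x _
      exact mul_self_nonneg _
    rw [split1, e3, hmean0]
    have : B = E0 - A + 2 * K := by linarith
    rw [hcdef]
    rw [this]
    ring_nf
    nlinarith [hApos, e4]
  -- convexity argument
  have step1 : ∀ t : ℝ, 0 ≤ t →
      (∫ x in (0:ℝ)..L, 2 * (u x 0 * Ut u x 0)) + c * t
        ≤ ∫ x in (0:ℝ)..L, 2 * (u x t * Ut u x t) := by
    intro t ht
    have hφ : ∀ s : ℝ, HasDerivAt
        (fun s' => (∫ x in (0:ℝ)..L, 2 * (u x s' * Ut u x s')) - c * s')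
        ((∫ x in (0:ℝ)..L,
          2 * (Ut u x s * Ut u x s + u x s * Ut (Ut u) x s)) - c) s := by
      intro s
      have h2 : HasDerivAt (fun s' : ℝ => c * s') c s := by
        simpa using (hasDerivAt_id s).const_mul c
      exact (hI1der s).sub h2
    have hmono : MonotoneOn
        (fun s' => (∫ x in (0:ℝ)..L, 2 * (u x s' * Ut u x s')) - c * s')
        (Ici 0) := by
      apply monotoneOn_of_deriv_nonneg (convex_Ici 0)
      · exact fun y _ => (hφ y).continuousAt.continuousWithinAt
      · exact fun y _ => (hφ y).differentiableAt.differentiableWithinAt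
      · intro y hy
        rw [interior_Ici] at hy
        rw [(hφ y).deriv]
        have := hLB y hy.le
        linarith
    have := hmono (self_mem_Ici) (mem_Ici.2 ht) ht
    simp only at this
    linarith
  have step2 : ∀ t : ℝ, 0 ≤ t →
      (∫ x in (0:ℝ)..L, (u x 0)^2)
        + (∫ x in (0:ℝ)..L, 2 * (u x 0 * Ut u x 0)) * t + (c/2) * t^2
        ≤ ∫ x in (0:ℝ)..L, (u x t)^2 := by
    intro t ht
    set I10 : ℝ := ∫ x in (0:ℝ)..L, 2 * (u x 0 * Ut u x 0) with hI10
    have hψ : ∀ s : ℝ, HasDerivAt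
        (fun s' => (∫ x in (0:ℝ)..L, (u x s')^2) - I10 * s' - (c/2) * s'^2)
        ((∫ x in (0:ℝ)..L, 2 * (u x s * Ut u x s)) - I10 - c * s) s := by
      intro s
      have h2 : HasDerivAt (fun s' : ℝ => I10 * s') I10 s := by
        simpa using (hasDerivAt_id s).const_mul I10
      have h3 : HasDerivAt (fun s' : ℝ => (c/2) * s'^2) (c * s) s := by
        have := (hasDerivAt_pow 2 s).const_mul (c/2)
        refine this.congr_deriv ?_
        push_cast
        ring
      exact ((hIder s).sub h2).sub h3
    have hmono : MonotoneOn
        (fun s' => (∫ x in (0:ℝ)..L, (u x s')^2) - I10 * s' - (c/2) * s'^2)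
        (Ici 0) := by
      apply monotoneOn_of_deriv_nonneg (convex_Ici 0)
      · exact fun y _ => (hψ y).continuousAt.continuousWithinAt
      · exact fun y _ => (hψ y).differentiableAt.differentiableWithinAt
      · intro y hy
        rw [interior_Ici] at hy
        rw [(hψ y).deriv]
        have := step1 y hy.le
        linarith
    have := hmono (self_mem_Ici) (mem_Ici.2 ht) ht
    simp only at this
    linarith
  -- choose a large enough time
  set I0 : ℝ := ∫ x in (0:ℝ)..L, (u x 0)^2 with hI0
  set I10 : ℝ := ∫ x in (0:ℝ)..L, 2 * (u x 0 * Ut u x 0) with hI10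
  set t0 : ℝ := max (max 1 ((2/c) * (1 - I10))) (C - I0 + 1) with ht0
  have ht0a : (1:ℝ) ≤ t0 := le_trans (le_max_left _ _) (le_max_left _ _)
  have ht0b : (2/c) * (1 - I10) ≤ t0 := le_trans (le_max_right _ _) (le_max_left _ _)
  have ht0c : C - I0 + 1 ≤ t0 := le_max_right _ _
  have ht0pos : (0:ℝ) ≤ t0 := le_trans zero_le_one ht0a
  refine ⟨t0, ht0pos, ?_⟩
  have hkey := step2 t0 ht0pos
  have h1 : 2 * (1 - I10) ≤ c * t0 := by
    have := mul_le_mul_of_nonneg_left ht0b hc.le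
    calc 2 * (1 - I10) = c * ((2/c) * (1 - I10)) := by field_simp
    _ ≤ c * t0 := this
  have h3 : 0 ≤ t0 * ((c/2) * t0 + I10 - 1) := by
    apply mul_nonneg ht0pos
    linarith
  have h4 : (c/2) * t0^2 + I10 * t0 - t0 = t0 * ((c/2) * t0 + I10 - 1) := by ring
  linarith
end

section
/- Let d₀ > 0 and let Λ : [0,∞) → ℝ be twice differentiable with Λ(t) > 0 for all t ≥ 0 and satisfying the differential inequality Λ''(t)·Λ(t) − (Λ'(t))² ≥ d₀·Λ(t) for all t ≥ 0. Then Λ is unbounded, i.e. sup_{t ≥ 0} Λ(t) = +∞. -/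
/-- The ordinary differential inequality at the heart of the blow-up argument:
if `Λ > 0` on `[0,∞)` and `Λ''·Λ − (Λ')² ≥ d₀·Λ` with `d₀ > 0`, then `Λ` is
unbounded on `[0,∞)`. -/
theorem ode_inequality_unbounded
    (d₀ : ℝ) (hd₀ : 0 < d₀) (Λ : ℝ → ℝ)
    (hpos : ∀ t : ℝ, 0 ≤ t → 0 < Λ t)
    (hdiff1 : ∀ t : ℝ, 0 ≤ t → DifferentiableAt ℝ Λ t)
    (hdiff2 : ∀ t : ℝ, 0 ≤ t → DifferentiableAt ℝ (deriv Λ) t)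
    (hineq : ∀ t : ℝ, 0 ≤ t →
      d₀ * Λ t ≤ deriv (deriv Λ) t * Λ t - (deriv Λ t)^2) :
    ∀ C : ℝ, ∃ t : ℝ, 0 ≤ t ∧ C < Λ t := by
  intro C
  -- Step 1: Λ'' ≥ d₀ on [0,∞)
  have hconvex : Convex ℝ (Set.Ici (0:ℝ)) := convex_Ici 0
  have hint : interior (Set.Ici (0:ℝ)) = Set.Ioi 0 := interior_Ici
  have hdd : ∀ t : ℝ, 0 ≤ t → d₀ ≤ deriv (deriv Λ) t := by
    intro t ht
    have h1 := hineq t ht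
    have h2 := hpos t ht
    nlinarith [sq_nonneg (deriv Λ t)]
  -- Step 2: deriv Λ t ≥ deriv Λ 0 + d₀ t
  set a := deriv Λ 0 with ha
  have key1 : ∀ t : ℝ, 0 ≤ t → a + d₀ * t ≤ deriv Λ t := by
    have := hconvex.mul_sub_le_image_sub_of_le_deriv
      (f := deriv Λ) (C := d₀)
      (fun x hx => ((hdiff2 x hx).continuousAt).continuousWithinAt)
      (fun x hx => (hdiff2 x (le_of_lt (by rw [hint] at hx; exact hx))).differentiableWithinAt)
      (fun x hx => hdd x (le_of_lt (by rw [hint] at hx; exact hx)))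
    intro t ht
    have := this 0 (by simp) t ht ht
    linarith
  -- Step 3: compare Λ with its quadratic minorant via g
  set g : ℝ → ℝ := fun t => Λ t - (a * t + d₀ / 2 * t ^ 2) with hg
  have hgdiffat : ∀ t : ℝ, 0 ≤ t → DifferentiableAt ℝ g t := by
    intro t ht
    exact (hdiff1 t ht).sub (by fun_prop)
  have hgderiv : ∀ t : ℝ, 0 ≤ t → deriv g t = deriv Λ t - (a + d₀ * t) := by
    intro t ht
    rw [hg]
    rw [deriv_fun_sub (hdiff1 t ht) (by fun_prop)]
    have hD : HasDerivAt (fun t : ℝ => a * t + d₀ / 2 * t ^ 2) (a + d₀ * t) t := by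
      have h1 : HasDerivAt (fun t : ℝ => a * t) (a * 1) t := (hasDerivAt_id t).const_mul a
      have h2 : HasDerivAt (fun t : ℝ => d₀ / 2 * t ^ 2) (d₀ / 2 * (2 * t ^ 1)) t :=
        (hasDerivAt_pow 2 t).const_mul (d₀ / 2)
      have := h1.fun_add h2
      refine this.congr_deriv ?_
      ring
    rw [hD.deriv]
  have key2 : ∀ t : ℝ, 0 ≤ t → g 0 ≤ g t := by
    have := hconvex.mul_sub_le_image_sub_of_le_deriv
      (f := g) (C := 0)
      (fun x hx => ((hgdiffat x hx).continuousAt).continuousWithinAt)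
      (fun x hx => (hgdiffat x (le_of_lt (by rw [hint] at hx; exact hx))).differentiableWithinAt)
      (fun x hx => by
        have hx0 : (0:ℝ) < x := by rw [hint] at hx; exact hx
        rw [hgderiv x hx0.le]
        have := key1 x hx0.le
        linarith)
    intro t ht
    have := this 0 (by simp) t ht ht
    linarith
  -- Step 4: choose t large
  set t := max 1 (2 / d₀ * (|a| + |C| + 1)) with htdef
  have ht1 : (1:ℝ) ≤ t := le_max_left _ _
  have ht0 : (0:ℝ) ≤ t := by linarith
  have ht2 : 2 / d₀ * (|a| + |C| + 1) ≤ t := le_max_right _ _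
  have htd : |a| + |C| + 1 ≤ d₀ / 2 * t := by
    have h := mul_le_mul_of_nonneg_left ht2 (le_of_lt (half_pos hd₀))
    calc |a| + |C| + 1 = d₀ / 2 * (2 / d₀ * (|a| + |C| + 1)) := by
          field_simp
      _ ≤ d₀ / 2 * t := h
  refine ⟨t, ht0, ?_⟩
  have hgt := key2 t ht0
  have hΛ0 := hpos 0 le_rfl
  have hg0 : g 0 = Λ 0 := by simp [hg]
  have hgt' : Λ 0 + a * t + d₀ / 2 * t ^ 2 ≤ Λ t := by
    have : g t = Λ t - (a * t + d₀ / 2 * t ^ 2) := rfl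
    rw [this, hg0] at hgt
    linarith
  have habs : -|a| ≤ a := neg_abs_le a
  have hCabs : C ≤ |C| := le_abs_self C
  nlinarith [mul_le_mul_of_nonneg_right htd ht0, mul_le_mul_of_nonneg_right habs ht0,
    mul_le_mul_of_nonneg_left ht1 (abs_nonneg C), abs_nonneg a, abs_nonneg C]
end

section
/- Let L > 0 and let u be a classical solution of the projected sinh-Gordon equation (C², L-periodic in x, with zero spatial mean). Then the energy E(t) = (1/2)∫₀^L [u_x(x,t)² + u_t(x,t)² − 2(cosh(u(x,t)) − 1)] dx is independent of t, i.e. E(t) = E(0) for all t ≥ 0. -/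
open Real MeasureTheory

/-- Differentiation under the interval integral for jointly continuous integrand
with jointly continuous derivative. -/
lemma hasDerivAt_intervalIntegral_of_continuous
    (L : ℝ) (F G : ℝ → ℝ → ℝ)
    (hF : Continuous fun p : ℝ × ℝ => F p.1 p.2)
    (hG : Continuous fun p : ℝ × ℝ => G p.1 p.2)
    (hd : ∀ x s : ℝ, HasDerivAt (fun s' => F x s') (G x s) s)
    (t0 : ℝ) :
    HasDerivAt (fun s => ∫ x in (0:ℝ)..L, F x s) (∫ x in (0:ℝ)..L, G x t0) t0 := by
  obtain ⟨C, hC⟩ := (isCompact_uIcc (a := (0:ℝ)) (b := L)).prod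
    (isCompact_closedBall t0 1) |>.exists_bound_of_continuousOn hG.continuousOn
  have key := intervalIntegral.hasDerivAt_integral_of_dominated_loc_of_deriv_le
    (F := fun s x => F x s) (F' := fun s x => G x s) (x₀ := t0) (bound := fun _ => C)
    (a := (0:ℝ)) (b := L) (μ := volume) (Metric.ball_mem_nhds t0 one_pos)
    (Filter.Eventually.of_forall fun s =>
      ((hF.comp (continuous_id.prodMk continuous_const)).aestronglyMeasurable))
    ((hF.comp (continuous_id.prodMk continuous_const)).intervalIntegrable 0 L)
    ((hG.comp (continuous_id.prodMk continuous_const)).aestronglyMeasurable)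
    (Filter.Eventually.of_forall fun x hx s hs =>
      hC (x, s) ⟨Set.uIoc_subset_uIcc hx, Metric.ball_subset_closedBall hs⟩)
    (intervalIntegrable_const)
    (Filter.Eventually.of_forall fun x _ s _ => hd x s)
  exact key.2

/-- Conservation of energy for classical solutions of the projected
sinh-Gordon equation. -/
theorem sinhGordon_energy_conservation
    (L : ℝ) (hL : 0 < L)
    (u : ℝ → ℝ → ℝ)
    (hreg : ContDiff ℝ 2 (Function.uncurry u))
    (hper : ∀ x t : ℝ, u (x + L) t = u x t)
    (hmean : ∀ t : ℝ, 0 ≤ t → (∫ x in (0:ℝ)..L, u x t) = 0)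
    (hpde : ∀ x t : ℝ, 0 ≤ t →
      deriv (deriv (fun s => u x s)) t
        - deriv (deriv (fun y => u y t)) x
        - Real.sinh (u x t)
        + (1 / L) * ∫ y in (0:ℝ)..L, Real.sinh (u y t) = 0) :
    ∀ t : ℝ, 0 ≤ t →
      (1/2) * (∫ x in (0:ℝ)..L,
        ((deriv (fun y => u y t) x)^2 + (deriv (fun s => u x s) t)^2
          - 2 * (Real.cosh (u x t) - 1)))
      = (1/2) * (∫ x in (0:ℝ)..L,
        ((deriv (fun y => u y 0) x)^2 + (deriv (fun s => u x s) 0)^2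
          - 2 * (Real.cosh (u x 0) - 1))) := by
  intro t ht
  have hfd : Differentiable ℝ (Function.uncurry u) := hreg.differentiable two_ne_zero
  set f := Function.uncurry u with hfdef
  have hcu : Continuous fun p : ℝ × ℝ => u p.1 p.2 := hreg.continuous
  have hf1 : ∀ p, HasFDerivAt f (fderiv ℝ f p) p := fun p => (hfd p).hasFDerivAt
  have hreg1 : ContDiff ℝ 1 (fderiv ℝ f) := hreg.fderiv_right (le_refl 2)
  have hfd' : Differentiable ℝ (fderiv ℝ f) := hreg1.differentiable one_ne_zero
  set f'' : ℝ × ℝ → (ℝ × ℝ) →L[ℝ] (ℝ × ℝ) →L[ℝ] ℝ := fun p => fderiv ℝ (fderiv ℝ f) p with hf''def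
  have hf2 : ∀ p, HasFDerivAt (fderiv ℝ f) (f'' p) p := fun p => (hfd' p).hasFDerivAt
  have hsymm : ∀ p v w, f'' p v w = f'' p w v := fun p => second_derivative_symmetric hf1 (hf2 p)
  set p1 : ℝ → ℝ → ℝ := fun x s => fderiv ℝ f (x, s) (1, 0) with hp1def
  set p2 : ℝ → ℝ → ℝ := fun x s => fderiv ℝ f (x, s) (0, 1) with hp2def
  have lineX : ∀ (s x : ℝ), HasDerivAt (fun y : ℝ => ((y, s) : ℝ × ℝ)) ((1:ℝ), (0:ℝ)) x :=
    fun s x => (hasDerivAt_id x).prodMk (hasDerivAt_const x s)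
  have lineT : ∀ (x s : ℝ), HasDerivAt (fun s' : ℝ => ((x, s') : ℝ × ℝ)) ((0:ℝ), (1:ℝ)) s :=
    fun x s => (hasDerivAt_const s x).prodMk (hasDerivAt_id s)
  -- first partials
  have hux : ∀ x s : ℝ, HasDerivAt (fun y => u y s) (p1 x s) x := by
    intro x s
    have h := (hf1 (x, s)).comp_hasDerivAt x (lineX s x)
    simpa [hfdef, Function.uncurry, Function.comp_def] using h
  have hut : ∀ x s : ℝ, HasDerivAt (fun s' => u x s') (p2 x s) s := by
    intro x s
    have h := (hf1 (x, s)).comp_hasDerivAt s (lineT x s)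
    simpa [hfdef, Function.uncurry, Function.comp_def] using h
  -- partials of the fderiv along lines
  have hDx : ∀ x s : ℝ, HasDerivAt (fun y => fderiv ℝ f (y, s)) (f'' (x, s) (1, 0)) x := by
    intro x s
    have h := (hf2 (x, s)).comp_hasDerivAt x (lineX s x)
    simpa [Function.comp_def] using h
  have hDt : ∀ x s : ℝ, HasDerivAt (fun s' => fderiv ℝ f (x, s')) (f'' (x, s) (0, 1)) s := by
    intro x s
    have h := (hf2 (x, s)).comp_hasDerivAt s (lineT x s)
    simpa [Function.comp_def] using h
  -- second partials, scalar valued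
  have hp1x : ∀ x s : ℝ, HasDerivAt (fun y => p1 y s) (f'' (x, s) (1, 0) (1, 0)) x := by
    intro x s
    simpa using (hDx x s).clm_apply (hasDerivAt_const x ((1:ℝ), (0:ℝ)))
  have hp1t : ∀ x s : ℝ, HasDerivAt (fun s' => p1 x s') (f'' (x, s) (0, 1) (1, 0)) s := by
    intro x s
    simpa using (hDt x s).clm_apply (hasDerivAt_const s ((1:ℝ), (0:ℝ)))
  have hp2x : ∀ x s : ℝ, HasDerivAt (fun y => p2 y s) (f'' (x, s) (1, 0) (0, 1)) x := by
    intro x s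
    simpa using (hDx x s).clm_apply (hasDerivAt_const x ((0:ℝ), (1:ℝ)))
  have hp2t : ∀ x s : ℝ, HasDerivAt (fun s' => p2 x s') (f'' (x, s) (0, 1) (0, 1)) s := by
    intro x s
    simpa using (hDt x s).clm_apply (hasDerivAt_const s ((0:ℝ), (1:ℝ)))
  -- continuity
  have hcD : Continuous (fderiv ℝ f) := hreg1.continuous
  have hcD2 : Continuous f'' := (hreg1.fderiv_right (m := 0) (by norm_num)).continuous
  have hcp1 : Continuous (fun p : ℝ × ℝ => p1 p.1 p.2) := hcD.clm_apply continuous_const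
  have hcp2 : Continuous (fun p : ℝ × ℝ => p2 p.1 p.2) := hcD.clm_apply continuous_const
  have hca : ∀ v w : ℝ × ℝ, Continuous (fun p : ℝ × ℝ => f'' p v w) :=
    fun v w => (hcD2.clm_apply continuous_const).clm_apply continuous_const
  -- rewrite the PDE in terms of f''
  have hpde' : ∀ x s : ℝ, 0 ≤ s →
      f'' (x, s) (0, 1) (0, 1) = f'' (x, s) (1, 0) (1, 0) + Real.sinh (u x s)
        - (1 / L) * ∫ y in (0:ℝ)..L, Real.sinh (u y s) := by
    intro x s hs
    have h := hpde x s hs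
    have e1 : deriv (deriv (fun s' => u x s')) s = f'' (x, s) (0, 1) (0, 1) := by
      have : deriv (fun s' => u x s') = fun s' => p2 x s' := funext fun s' => (hut x s').deriv
      rw [this]; exact (hp2t x s).deriv
    have e2 : deriv (deriv (fun y => u y s)) x = f'' (x, s) (1, 0) (1, 0) := by
      have : deriv (fun y => u y s) = fun y => p1 y s := funext fun y => (hux y s).deriv
      rw [this]; exact (hp1x x s).deriv
    rw [e1, e2] at h
    linarith
  -- periodicity of partials
  have hperX : ∀ s : ℝ, Function.Periodic (fun y => u y s) L := fun s x => hper x s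
  have hper1 : ∀ s : ℝ, p1 L s = p1 0 s := by
    intro s
    have hsub : HasDerivAt (fun y : ℝ => y - L) (1 : ℝ) L := by
      simpa using (hasDerivAt_id L).sub_const L
    have h0 : HasDerivAt (fun y => u y s) (p1 0 s) (L - L) := by
      simpa using hux 0 s
    have hcomp : HasDerivAt ((fun y => u y s) ∘ (fun y : ℝ => y - L)) (p1 0 s * 1) L :=
      HasDerivAt.comp (h := fun y : ℝ => y - L) L h0 hsub
    have heq : ((fun y => u y s) ∘ (fun y : ℝ => y - L)) = fun y => u y s := funext fun y => by
      have := hper (y - L) s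
      simp only [Function.comp]
      simpa using this.symm
    rw [heq, mul_one] at hcomp
    exact (hux L s).unique hcomp
  have hper2 : ∀ s : ℝ, p2 L s = p2 0 s := by
    intro s
    have : (fun s' => u L s') = fun s' => u 0 s' := funext fun s' => by
      simpa using hper 0 s'
    have h1 := hut L s
    rw [this] at h1
    exact h1.unique (hut 0 s)
  -- the zero-mean of p2 for s ≥ 0
  have hmean' : ∀ s : ℝ, 0 ≤ s → (∫ x in (0:ℝ)..L, p2 x s) = 0 := by
    intro s hs
    have hm : ∀ s0 : ℝ, HasDerivAt (fun s' => ∫ x in (0:ℝ)..L, u x s')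
        (∫ x in (0:ℝ)..L, p2 x s0) s0 :=
      hasDerivAt_intervalIntegral_of_continuous L u p2 hcu hcp2 (fun x s' => hut x s')
    rcases eq_or_lt_of_le hs with h0 | h0
    · -- s = 0 : one-sided argument
      subst h0
      have h1 : HasDerivWithinAt (fun s' => ∫ x in (0:ℝ)..L, u x s')
          (∫ x in (0:ℝ)..L, p2 x 0) (Set.Ici 0) 0 := (hm 0).hasDerivWithinAt
      have h2 : HasDerivWithinAt (fun s' => ∫ x in (0:ℝ)..L, u x s')
          (0 : ℝ) (Set.Ici 0) 0 := by
        have hc : HasDerivWithinAt (fun _ : ℝ => (0:ℝ)) (0:ℝ) (Set.Ici 0) 0 :=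
          (hasDerivAt_const 0 (0:ℝ)).hasDerivWithinAt
        exact hc.congr (fun y hy => (hmean y hy).symm ▸ rfl) (by simpa using (hmean 0 le_rfl))
      have hu0 : UniqueDiffWithinAt ℝ (Set.Ici (0:ℝ)) 0 :=
        uniqueDiffOn_Ici 0 0 Set.self_mem_Ici
      rw [← h1.derivWithin hu0, h2.derivWithin hu0]
    · -- s > 0 : locally constant
      have hev : (fun s' => ∫ x in (0:ℝ)..L, u x s') =ᶠ[nhds s] fun _ => (0:ℝ) :=
        Filter.eventually_of_mem (Ioi_mem_nhds h0) fun y hy => hmean y (le_of_lt hy)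
      have hz : HasDerivAt (fun s' => ∫ x in (0:ℝ)..L, u x s') 0 s :=
        (hasDerivAt_const s (0:ℝ)).congr_of_eventuallyEq hev
      exact (hm s).unique hz
  -- the energy integrand and its time derivative
  set F : ℝ → ℝ → ℝ := fun x s => (p1 x s)^2 + (p2 x s)^2 - 2 * (Real.cosh (u x s) - 1)
    with hFdef
  set G : ℝ → ℝ → ℝ := fun x s =>
      2 * p1 x s * f'' (x, s) (0, 1) (1, 0) + 2 * p2 x s * f'' (x, s) (0, 1) (0, 1)
        - 2 * Real.sinh (u x s) * p2 x s with hGdef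
  have hFt : ∀ x s : ℝ, HasDerivAt (fun s' => F x s') (G x s) s := by
    intro x s
    have h1 : HasDerivAt (fun s' => (p1 x s')^2) (2 * p1 x s * f'' (x, s) (0, 1) (1, 0)) s := by
      have := (hp1t x s).fun_pow 2
      simpa [mul_comm, mul_assoc, mul_left_comm] using this
    have h2 : HasDerivAt (fun s' => (p2 x s')^2) (2 * p2 x s * f'' (x, s) (0, 1) (0, 1)) s := by
      have := (hp2t x s).fun_pow 2
      simpa [mul_comm, mul_assoc, mul_left_comm] using this
    have h3 : HasDerivAt (fun s' => 2 * (Real.cosh (u x s') - 1))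
        (2 * Real.sinh (u x s) * p2 x s) s := by
      have hc : HasDerivAt (fun s' => Real.cosh (u x s')) (Real.sinh (u x s) * p2 x s) s :=
        (hut x s).cosh
      have := ((hc.sub_const 1).const_mul 2)
      simpa [mul_assoc] using this
    simpa [hGdef] using (h1.fun_add h2).fun_sub h3
  have hcF : Continuous fun p : ℝ × ℝ => F p.1 p.2 := by
    apply Continuous.sub
    · exact (hcp1.pow 2).add (hcp2.pow 2)
    · exact (continuous_const.mul ((Real.continuous_cosh.comp hcu).sub continuous_const))
  have hcG : Continuous fun p : ℝ × ℝ => G p.1 p.2 := by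
    apply Continuous.sub
    · exact ((continuous_const.mul hcp1).mul (hca (0,1) (1,0))).add
        ((continuous_const.mul hcp2).mul (hca (0,1) (0,1)))
    · exact (continuous_const.mul (Real.continuous_sinh.comp hcu)).mul hcp2
  -- energy and its derivative
  set E : ℝ → ℝ := fun s => ∫ x in (0:ℝ)..L, F x s with hEdef
  have hE : ∀ s : ℝ, HasDerivAt E (∫ x in (0:ℝ)..L, G x s) s :=
    hasDerivAt_intervalIntegral_of_continuous L F G hcF hcG hFt
  -- the derivative vanishes for s ≥ 0
  have hGzero : ∀ s : ℝ, 0 ≤ s → (∫ x in (0:ℝ)..L, G x s) = 0 := by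
    intro s hs
    set c : ℝ := 2 * ((1 / L) * ∫ y in (0:ℝ)..L, Real.sinh (u y s)) with hcdef
    have hGrw : ∀ x : ℝ, G x s =
        (f'' (x, s) (1, 0) (1, 0) * p2 x s + p1 x s * f'' (x, s) (1, 0) (0, 1)) * 2
          - c * p2 x s := by
      intro x
      have h12 : f'' (x, s) (0, 1) (1, 0) = f'' (x, s) (1, 0) (0, 1) := hsymm _ _ _
      rw [hGdef]
      simp only []
      rw [hpde' x s hs, h12, hcdef]
      ring
    -- the first part is an exact x-derivative
    have hIBP : (∫ x in (0:ℝ)..L,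
        (f'' (x, s) (1, 0) (1, 0) * p2 x s + p1 x s * f'' (x, s) (1, 0) (0, 1))) = 0 := by
      have hder : ∀ x ∈ Set.uIcc (0:ℝ) L, HasDerivAt (fun y => p1 y s * p2 y s)
          (f'' (x, s) (1, 0) (1, 0) * p2 x s + p1 x s * f'' (x, s) (1, 0) (0, 1)) x :=
        fun x _ => (hp1x x s).mul (hp2x x s)
      have hint : IntervalIntegrable (fun x =>
          f'' (x, s) (1, 0) (1, 0) * p2 x s + p1 x s * f'' (x, s) (1, 0) (0, 1))
          volume 0 L := by
        apply Continuous.intervalIntegrable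
        exact (((hca (1,0) (1,0)).comp (continuous_id.prodMk continuous_const)).mul
            (hcp2.comp (continuous_id.prodMk continuous_const))).add
          ((hcp1.comp (continuous_id.prodMk continuous_const)).mul
            ((hca (1,0) (0,1)).comp (continuous_id.prodMk continuous_const)))
      rw [intervalIntegral.integral_eq_sub_of_hasDerivAt hder hint, hper1 s, hper2 s]
      ring
    have hi1 : IntervalIntegrable (fun x =>
        f'' (x, s) (1, 0) (1, 0) * p2 x s + p1 x s * f'' (x, s) (1, 0) (0, 1)) volume 0 L := by
      apply Continuous.intervalIntegrable
      exact (((hca (1,0) (1,0)).comp (continuous_id.prodMk continuous_const)).mul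
          (hcp2.comp (continuous_id.prodMk continuous_const))).add
        ((hcp1.comp (continuous_id.prodMk continuous_const)).mul
          ((hca (1,0) (0,1)).comp (continuous_id.prodMk continuous_const)))
    have hi2 : IntervalIntegrable (fun x => p2 x s) volume 0 L :=
      (hcp2.comp (continuous_id.prodMk continuous_const)).intervalIntegrable 0 L
    calc (∫ x in (0:ℝ)..L, G x s)
        = ∫ x in (0:ℝ)..L,
            ((f'' (x, s) (1, 0) (1, 0) * p2 x s + p1 x s * f'' (x, s) (1, 0) (0, 1)) * 2
              - c * p2 x s) := by
          exact intervalIntegral.integral_congr fun x _ => hGrw x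
      _ = (∫ x in (0:ℝ)..L,
            (f'' (x, s) (1, 0) (1, 0) * p2 x s + p1 x s * f'' (x, s) (1, 0) (0, 1))) * 2
            - c * ∫ x in (0:ℝ)..L, p2 x s := by
          rw [intervalIntegral.integral_sub (hi1.mul_const 2) (hi2.const_mul c),
            intervalIntegral.integral_mul_const, intervalIntegral.integral_const_mul]
      _ = 0 := by rw [hIBP, hmean' s hs]; ring
  -- conclude constancy on [0, t]
  have hconst : E t = E 0 := by
    have hcont : ContinuousOn E (Set.Icc 0 t) :=
      fun s _ => ((hE s).continuousAt).continuousWithinAt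
    have hd : ∀ s ∈ Set.Ico (0:ℝ) t, HasDerivWithinAt E 0 (Set.Ici s) s := by
      intro s hs
      have := hE s
      rw [hGzero s hs.1] at this
      exact this.hasDerivWithinAt
    exact constant_of_has_deriv_right_zero hcont hd t ⟨ht, le_rfl⟩
  -- translate back to the statement
  have hEq : ∀ s : ℝ, (∫ x in (0:ℝ)..L,
      ((deriv (fun y => u y s) x)^2 + (deriv (fun s' => u x s') s)^2
        - 2 * (Real.cosh (u x s) - 1))) = E s := by
    intro s
    apply intervalIntegral.integral_congr
    intro x _
    simp only [hFdef, (hux x s).deriv, (hut x s).deriv]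
  rw [hEq t, hEq 0, hconst]
end

section
/- Let L > 0 and let u be a classical solution of the projected sinh-Gordon equation (C², L-periodic in x, with zero spatial mean). Then the momentum F(t) = ∫₀^L u_x(x,t)·u_t(x,t) dx is independent of t, i.e. F(t) = F(0) for all t ≥ 0. -/
open Real MeasureTheory

/-- Conservation of momentum `F(t) = ∫₀^L uₓ u_t dx` for classical solutions
of the projected sinh-Gordon equation. -/
theorem sinhGordon_momentum_conservation
    (L : ℝ) (hL : 0 < L)
    (u : ℝ → ℝ → ℝ)
    (hreg : ContDiff ℝ 2 (Function.uncurry u))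
    (hper : ∀ x t : ℝ, u (x + L) t = u x t)
    (hmean : ∀ t : ℝ, 0 ≤ t → (∫ x in (0:ℝ)..L, u x t) = 0)
    (hpde : ∀ x t : ℝ, 0 ≤ t →
      deriv (deriv (fun s => u x s)) t
        - deriv (deriv (fun y => u y t)) x
        - Real.sinh (u x t)
        + (1 / L) * ∫ y in (0:ℝ)..L, Real.sinh (u y t) = 0) :
    ∀ t : ℝ, 0 ≤ t →
      (∫ x in (0:ℝ)..L, deriv (fun y => u y t) x * deriv (fun s => u x s) t)
      = ∫ x in (0:ℝ)..L, deriv (fun y => u y 0) x * deriv (fun s => u x s) 0 := by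
  classical
  set U : ℝ × ℝ → ℝ := Function.uncurry u with hUdef
  set g : ℝ × ℝ → (ℝ × ℝ →L[ℝ] ℝ) := fderiv ℝ U with hgdef
  set g2 : ℝ × ℝ → (ℝ × ℝ →L[ℝ] (ℝ × ℝ →L[ℝ] ℝ)) := fderiv ℝ g with hg2def
  have hg : ContDiff ℝ 1 g := hreg.fderiv_right (by norm_num)
  have hUdiff : Differentiable ℝ U := hreg.differentiable (by norm_num)
  have hgdiff : Differentiable ℝ g := hg.differentiable one_ne_zero
  have hgcont : Continuous g := hg.continuous
  have hg2cont : Continuous g2 := hg.continuous_fderiv one_ne_zero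
  -- straight-line curves
  have hline_x : ∀ x t : ℝ, HasDerivAt (fun y : ℝ => (y, t)) (((1:ℝ), (0:ℝ)) : ℝ × ℝ) x :=
    fun x t => (hasDerivAt_id x).prodMk (hasDerivAt_const x t)
  have hline_t : ∀ x t : ℝ, HasDerivAt (fun s : ℝ => (x, s)) (((0:ℝ), (1:ℝ)) : ℝ × ℝ) t :=
    fun x t => (hasDerivAt_const t x).prodMk (hasDerivAt_id t)
  -- first partial derivatives
  have hd_x : ∀ x t : ℝ, HasDerivAt (fun y => u y t) (g (x, t) (1, 0)) x := fun x t =>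
    ((hUdiff (x, t)).hasFDerivAt.comp_hasDerivAt x (hline_x x t) :)
  have hd_t : ∀ x t : ℝ, HasDerivAt (fun s => u x s) (g (x, t) (0, 1)) t := fun x t =>
    ((hUdiff (x, t)).hasFDerivAt.comp_hasDerivAt t (hline_t x t) :)
  -- second partial derivatives
  have hdg_t : ∀ (x t : ℝ) (v : ℝ × ℝ),
      HasDerivAt (fun s => g (x, s) v) (g2 (x, t) (0, 1) v) t := by
    intro x t v
    have h1 : HasDerivAt (fun s => g (x, s)) (g2 (x, t) (0, 1)) t :=
      (hgdiff (x, t)).hasFDerivAt.comp_hasDerivAt t (hline_t x t)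
    exact ((ContinuousLinearMap.apply ℝ ℝ v).hasFDerivAt).comp_hasDerivAt t h1
  have hdg_x : ∀ (x t : ℝ) (v : ℝ × ℝ),
      HasDerivAt (fun y => g (y, t) v) (g2 (x, t) (1, 0) v) x := by
    intro x t v
    have h1 : HasDerivAt (fun y => g (y, t)) (g2 (x, t) (1, 0)) x :=
      (hgdiff (x, t)).hasFDerivAt.comp_hasDerivAt x (hline_x x t)
    exact ((ContinuousLinearMap.apply ℝ ℝ v).hasFDerivAt).comp_hasDerivAt x h1
  -- symmetry of second derivatives
  have hsymm : ∀ (p : ℝ × ℝ) (v w : ℝ × ℝ), g2 p v w = g2 p w v := fun p v w =>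
    (hreg.contDiffAt.isSymmSndFDerivAt (by simp)) v w
  -- continuity helpers
  have hcont_g : ∀ v : ℝ × ℝ, Continuous fun p => g p v := fun v =>
    (ContinuousLinearMap.apply ℝ ℝ v).continuous.comp hgcont
  have hcont_g2 : ∀ v w : ℝ × ℝ, Continuous fun p => g2 p v w := fun v w =>
    (ContinuousLinearMap.apply ℝ ℝ w).continuous.comp
      ((ContinuousLinearMap.apply ℝ (ℝ × ℝ →L[ℝ] ℝ) v).continuous.comp hg2cont)
  have hcont_slice : ∀ (t : ℝ) (v : ℝ × ℝ), Continuous fun x => g (x, t) v := fun t v =>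
    (hcont_g v).comp (continuous_id.prodMk continuous_const)
  -- periodicity of the partial derivatives
  have hper_x : ∀ x t : ℝ, g (x + L, t) (1, 0) = g (x, t) (1, 0) := by
    intro x t
    have h1 := (hd_x (x + L) t).deriv
    have h2 := (hd_x x t).deriv
    have h3 : deriv (fun y => u y t) (x + L) = deriv (fun y => u y t) x := by
      rw [← deriv_comp_add_const (f := fun y => u y t) (a := L)]
      congr 1
      funext y
      exact hper y t
    rw [← h1, h3, h2]
  have hper_t : ∀ x t : ℝ, g (x + L, t) (0, 1) = g (x, t) (0, 1) := by
    intro x t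
    have h1 := (hd_t (x + L) t).deriv
    have h2 := (hd_t x t).deriv
    rw [← h1, ← h2]
    congr 1
    funext s
    exact hper x s
  -- the momentum and its pointwise time-derivative
  set Φ : ℝ → ℝ → ℝ := fun x t =>
    g2 (x, t) (0, 1) (1, 0) * g (x, t) (0, 1) + g (x, t) (1, 0) * g2 (x, t) (0, 1) (0, 1)
    with hΦdef
  set F : ℝ → ℝ := fun t => ∫ x in (0:ℝ)..L, g (x, t) (1, 0) * g (x, t) (0, 1) with hFdef
  have hcontΦ : Continuous fun p : ℝ × ℝ => Φ p.1 p.2 := by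
    simp only [hΦdef]
    exact ((hcont_g2 (0, 1) (1, 0)).mul (hcont_g (0, 1))).add
      ((hcont_g (1, 0)).mul (hcont_g2 (0, 1) (0, 1)))
  -- differentiation under the integral sign
  have claimA : ∀ t₀ : ℝ, HasDerivAt F (∫ x in (0:ℝ)..L, Φ x t₀) t₀ := by
    intro t₀
    obtain ⟨C, hC⟩ := ((isCompact_Icc (a := (0:ℝ)) (b := L)).prod
      (isCompact_Icc (a := t₀ - 1) (b := t₀ + 1))).exists_bound_of_continuousOn
      hcontΦ.continuousOn
    have hsub : Set.uIoc (0:ℝ) L ⊆ Set.Icc 0 L := by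
      rw [Set.uIoc_of_le hL.le]
      exact Set.Ioc_subset_Icc_self
    have key := intervalIntegral.hasDerivAt_integral_of_dominated_loc_of_deriv_le
      (μ := volume) (F := fun t x => g (x, t) (1, 0) * g (x, t) (0, 1))
      (F' := fun t x => Φ x t) (x₀ := t₀) (s := Metric.ball t₀ 1) (a := 0) (b := L)
      (bound := fun _ => C) (Metric.ball_mem_nhds t₀ one_pos)
      (Filter.Eventually.of_forall fun t =>
        (((hcont_slice t (1, 0)).mul (hcont_slice t (0, 1))).aestronglyMeasurable))
      (((hcont_slice t₀ (1, 0)).mul (hcont_slice t₀ (0, 1))).intervalIntegrable 0 L)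
      ((hcontΦ.comp (continuous_id.prodMk continuous_const)).aestronglyMeasurable)
      (Filter.Eventually.of_forall fun x hx => by
        intro t ht
        have hxI : x ∈ Set.Icc (0:ℝ) L := hsub hx
        have htI : t ∈ Set.Icc (t₀ - 1) (t₀ + 1) := by
          rw [Real.ball_eq_Ioo] at ht
          exact Set.Ioo_subset_Icc_self ht
        exact hC (x, t) ⟨hxI, htI⟩)
      (intervalIntegrable_const)
      (Filter.Eventually.of_forall fun x hx => by
        intro t ht
        exact (hdg_t x t (1, 0)).mul (hdg_t x t (0, 1)))
    exact key.2
  -- vanishing of the time-derivative of the momentum, via the PDE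
  have claimB : ∀ t : ℝ, 0 ≤ t → (∫ x in (0:ℝ)..L, Φ x t) = 0 := by
    intro t ht
    set c : ℝ := (1 / L) * ∫ y in (0:ℝ)..L, Real.sinh (u y t) with hcdef
    set Hf : ℝ → ℝ := fun x =>
      (1/2) * (g (x, t) (0, 1) * g (x, t) (0, 1))
        + (1/2) * (g (x, t) (1, 0) * g (x, t) (1, 0))
        + Real.cosh (u x t) - c * u x t with hHdef
    have hutt : ∀ x : ℝ, g2 (x, t) (0, 1) (0, 1)
        = g2 (x, t) (1, 0) (1, 0) + Real.sinh (u x t) - c := by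
      intro x
      have h1 : deriv (fun s => u x s) = fun s => g (x, s) (0, 1) := by
        funext s; exact (hd_t x s).deriv
      have h2 : deriv (deriv (fun s => u x s)) t = g2 (x, t) (0, 1) (0, 1) := by
        rw [h1]; exact (hdg_t x t (0, 1)).deriv
      have h3 : deriv (fun y => u y t) = fun y => g (y, t) (1, 0) := by
        funext y; exact (hd_x y t).deriv
      have h4 : deriv (deriv (fun y => u y t)) x = g2 (x, t) (1, 0) (1, 0) := by
        rw [h3]; exact (hdg_x x t (1, 0)).deriv
      have h5 := hpde x t ht
      rw [h2, h4, ← hcdef] at h5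
      linarith
    have hHd : ∀ x : ℝ, HasDerivAt Hf (Φ x t) x := by
      intro x
      have h1 : HasDerivAt (fun y => g (y, t) (0, 1)) (g2 (x, t) (1, 0) (0, 1)) x :=
        hdg_x x t (0, 1)
      have h2 : HasDerivAt (fun y => g (y, t) (1, 0)) (g2 (x, t) (1, 0) (1, 0)) x :=
        hdg_x x t (1, 0)
      have h3 : HasDerivAt (fun y => Real.cosh (u y t)) (Real.sinh (u x t) * g (x, t) (1, 0)) x :=
        (hd_x x t).cosh
      have h4 : HasDerivAt (fun y => c * u y t) (c * g (x, t) (1, 0)) x :=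
        (hd_x x t).const_mul c
      have h5 := ((((h1.mul h1).const_mul (1/2)).add ((h2.mul h2).const_mul (1/2))).add h3).sub h4
      refine h5.congr_deriv ?_
      simp only [hΦdef]
      rw [hutt x, hsymm (x, t) (0, 1) (1, 0)]
      ring
    have hΦcont : Continuous fun x => Φ x t :=
      hcontΦ.comp (continuous_id.prodMk continuous_const)
    have hint : IntervalIntegrable (fun x => Φ x t) volume 0 L := hΦcont.intervalIntegrable 0 L
    have hFTC := intervalIntegral.integral_eq_sub_of_hasDerivAt (fun x _ => hHd x) hint
    rw [hFTC]
    have e1 : u L t = u 0 t := by have := hper 0 t; rwa [zero_add] at this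
    have e2 : g (L, t) (0, 1) = g (0, t) (0, 1) := by
      have := hper_t 0 t; rwa [zero_add] at this
    have e3 : g (L, t) (1, 0) = g (0, t) (1, 0) := by
      have := hper_x 0 t; rwa [zero_add] at this
    simp only [hHdef]
    rw [e1, e2, e3]
    ring
  -- rewriting the statement in terms of `F`
  have hFrw : ∀ s : ℝ,
      (∫ x in (0:ℝ)..L, deriv (fun y => u y s) x * deriv (fun r => u x r) s) = F s := by
    intro s
    apply intervalIntegral.integral_congr
    intro x _
    show deriv (fun y => u y s) x * deriv (fun r => u x r) s
      = g (x, s) (1, 0) * g (x, s) (0, 1)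
    rw [(hd_x x s).deriv, (hd_t x s).deriv]
  -- conclusion: F is constant on [0, ∞)
  intro t ht
  rw [hFrw t, hFrw 0]
  have hconst := constant_of_has_deriv_right_zero (f := F) (a := 0) (b := t)
    (fun s _ => (claimA s).continuousAt.continuousWithinAt)
    (fun s hs => by
      have h0 : (0:ℝ) ≤ s := hs.1
      have h := claimA s
      rw [claimB s h0] at h
      exact h.hasDerivWithinAt)
  exact hconst t (Set.right_mem_Icc.mpr ht)
end

section
/- Let L > 0 and R > 0. There exists a constant M > 0, depending only on L and R, such that for all twice continuously differentiable L-periodic functions u₁, u₂ : ℝ → ℝ satisfying ∫₀^L (uⱼ(x)² + uⱼ'(x)² + uⱼ''(x)²) dx ≤ R² for j = 1,2, one has ∫₀^L (cosh(u₁(x))u₁'(x) − cosh(u₂(x))u₂'(x))² dx ≤ M² · ∫₀^L ((u₁−u₂)(x)² + (u₁'−u₂')(x)² + (u₁''−u₂'')(x)²) dx. -/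
open Real MeasureTheory

lemma sup_sq_bound (L : ℝ) (hL : 0 < L) (u : ℝ → ℝ) (hu : ContDiff ℝ 1 u)
    (hper : Function.Periodic u L) (x : ℝ) :
    (u x)^2 ≤ (1/L + 1) * ∫ t in (0:ℝ)..L, ((u t)^2 + (deriv u t)^2) := by
  have hc : Continuous u := hu.continuous
  have hd : Continuous (deriv u) := hu.continuous_deriv le_rfl
  set f : ℝ → ℝ := fun t => (u t)^2 with hf
  have hfc : Continuous f := hc.pow 2
  have hderiv : ∀ t, HasDerivAt f (2 * u t * deriv u t) t := by
    intro t
    have := ((hu.differentiable (by norm_num) t).hasDerivAt.fun_pow 2)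
    simpa [pow_one, mul_comm, mul_assoc, mul_left_comm] using this
  have hgc : Continuous (fun t => 2 * u t * deriv u t) :=
    (continuous_const.mul hc).mul hd
  obtain ⟨y, hy, hmin⟩ := isCompact_Icc.exists_isMinOn (Set.nonempty_Icc.2 hL.le)
    (hfc.continuousOn : ContinuousOn f (Set.Icc 0 L))
  have hIf : IntervalIntegrable f volume 0 L := hfc.intervalIntegrable _ _
  have hIu2 : IntervalIntegrable (fun t => (u t)^2 + (deriv u t)^2) volume 0 L :=
    ((hc.pow 2).add (hd.pow 2)).intervalIntegrable _ _
  have hmin' : L * f y ≤ ∫ t in (0:ℝ)..L, f t := by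
    have h1 : ∫ t in (0:ℝ)..L, f y ≤ ∫ t in (0:ℝ)..L, f t :=
      intervalIntegral.integral_mono_on hL.le (intervalIntegrable_const) hIf
        (fun t ht => hmin ht)
    simpa [smul_eq_mul, mul_comm] using h1
  have hperf : Function.Periodic f L := fun t => by simp [hf, hper t]
  obtain ⟨x', hx', heq⟩ := hperf.exists_mem_Ico₀ hL x
  have hx'0 : (0:ℝ) ≤ x' := hx'.1
  have hx'L : x' ≤ L := hx'.2.le
  have hftc : ∀ a b : ℝ, (∫ t in a..b, 2 * u t * deriv u t) = f b - f a := by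
    intro a b
    exact intervalIntegral.integral_eq_sub_of_hasDerivAt (fun t _ => hderiv t)
      (hgc.intervalIntegrable _ _)
  have habs : |f x' - f y| ≤ ∫ t in (0:ℝ)..L, |2 * u t * deriv u t| := by
    have hIg : IntervalIntegrable (fun t => |2 * u t * deriv u t|) volume 0 L :=
      hgc.abs.intervalIntegrable _ _
    rcases le_total y x' with h | h
    · calc |f x' - f y| = |∫ t in y..x', 2 * u t * deriv u t| := by rw [hftc]
        _ ≤ ∫ t in y..x', |2 * u t * deriv u t| :=
            intervalIntegral.abs_integral_le_integral_abs h
        _ ≤ ∫ t in (0:ℝ)..L, |2 * u t * deriv u t| :=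
            intervalIntegral.integral_mono_interval hy.1 h hx'L
              (Filter.Eventually.of_forall fun t => abs_nonneg _) hIg
    · calc |f x' - f y| = |f y - f x'| := abs_sub_comm _ _
        _ = |∫ t in x'..y, 2 * u t * deriv u t| := by rw [hftc]
        _ ≤ ∫ t in x'..y, |2 * u t * deriv u t| :=
            intervalIntegral.abs_integral_le_integral_abs h
        _ ≤ ∫ t in (0:ℝ)..L, |2 * u t * deriv u t| :=
            intervalIntegral.integral_mono_interval hx'0 h hy.2
              (Filter.Eventually.of_forall fun t => abs_nonneg _) hIg
  have habs2 : (∫ t in (0:ℝ)..L, |2 * u t * deriv u t|)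
      ≤ ∫ t in (0:ℝ)..L, ((u t)^2 + (deriv u t)^2) := by
    apply intervalIntegral.integral_mono_on hL.le (hgc.abs.intervalIntegrable _ _) hIu2
    intro t _
    have := sq_nonneg (u t - deriv u t)
    have := sq_nonneg (u t + deriv u t)
    rw [abs_le]
    constructor <;> nlinarith
  have hfle : (∫ t in (0:ℝ)..L, f t) ≤ ∫ t in (0:ℝ)..L, ((u t)^2 + (deriv u t)^2) := by
    apply intervalIntegral.integral_mono_on hL.le hIf hIu2
    intro t _
    have := sq_nonneg (deriv u t); simp [hf]; nlinarith
  have hxx : f x = f x' := heq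
  have h1 : f x' ≤ f y + ∫ t in (0:ℝ)..L, |2 * u t * deriv u t| := by
    have h2 := (abs_le.mp habs).2
    nlinarith [abs_nonneg (f x' - f y), le_abs_self (f x' - f y)]
  have hint_nonneg : 0 ≤ ∫ t in (0:ℝ)..L, ((u t)^2 + (deriv u t)^2) :=
    intervalIntegral.integral_nonneg hL.le (fun t _ => by positivity)
  have : (u x)^2 = f x := rfl
  rw [this, hxx]
  have hLinv : 0 < 1/L := by positivity
  have h3 : f y ≤ (1/L) * ∫ t in (0:ℝ)..L, f t := by
    rw [one_div, inv_mul_eq_div, le_div_iff₀ hL]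
    nlinarith [hmin']
  nlinarith [h1, h3, habs2, hfle, hmin']

lemma lipschitz_arith (Cc Aa α β γ : ℝ) (hC : 1 ≤ Cc) (hA : 0 ≤ Aa)
    (hα : 0 ≤ α) (hβ : 0 ≤ β) (hγ : 0 ≤ γ) :
    (Cc * β + (Cc * α) * Aa)^2 ≤ Cc^2 * (2 * (1 + Aa^2)) * (α^2 + β^2 + γ) := by
  nlinarith [mul_nonneg (sq_nonneg Cc) (sq_nonneg (Aa * α - β)),
    mul_nonneg (sq_nonneg Cc) hγ,
    mul_nonneg (mul_nonneg (sq_nonneg Cc) (sq_nonneg Aa)) hγ,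
    mul_nonneg (sq_nonneg Cc) (sq_nonneg α),
    mul_nonneg (mul_nonneg (sq_nonneg Cc) (sq_nonneg Aa)) (sq_nonneg β),
    sq_nonneg Cc]

/-- Local Lipschitz estimate for the nonlinearity `u ↦ ∂ₓ sinh(u) = cosh(u)·u'`
on balls of the periodic `H²` norm. -/
theorem cosh_deriv_lipschitz_on_H2_balls
    (L R : ℝ) (hL : 0 < L) (hR : 0 < R) :
    ∃ M : ℝ, 0 < M ∧ ∀ u₁ u₂ : ℝ → ℝ,
      ContDiff ℝ 2 u₁ → ContDiff ℝ 2 u₂ →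
      (∀ x, u₁ (x + L) = u₁ x) → (∀ x, u₂ (x + L) = u₂ x) →
      (∫ x in (0:ℝ)..L, ((u₁ x)^2 + (deriv u₁ x)^2 + (deriv (deriv u₁) x)^2)) ≤ R^2 →
      (∫ x in (0:ℝ)..L, ((u₂ x)^2 + (deriv u₂ x)^2 + (deriv (deriv u₂) x)^2)) ≤ R^2 →
      (∫ x in (0:ℝ)..L,
          (Real.cosh (u₁ x) * deriv u₁ x - Real.cosh (u₂ x) * deriv u₂ x)^2)
        ≤ M^2 * ∫ x in (0:ℝ)..L,
            ((u₁ x - u₂ x)^2 + (deriv u₁ x - deriv u₂ x)^2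
              + (deriv (deriv u₁) x - deriv (deriv u₂) x)^2) := by
  set A := Real.sqrt ((1/L + 1) * R^2) with hA
  have hA0 : 0 ≤ A := Real.sqrt_nonneg _
  have hA2 : A^2 = (1/L + 1) * R^2 := Real.sq_sqrt (by positivity)
  set C := Real.cosh A with hCdef
  have hC1 : (1:ℝ) ≤ C := Real.one_le_cosh A
  have hC0 : (0:ℝ) < C := lt_of_lt_of_le one_pos hC1
  refine ⟨C * Real.sqrt (2*(1+A^2)), by positivity, ?_⟩
  intro u₁ u₂ hu₁ hu₂ hp₁ hp₂ hb₁ hb₂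
  set M := C * Real.sqrt (2*(1+A^2)) with hM
  have hM2 : M^2 = C^2 * (2*(1+A^2)) := by
    rw [hM, mul_pow, Real.sq_sqrt (by positivity)]
  -- uniform bounds for each function
  have facts : ∀ u : ℝ → ℝ, ContDiff ℝ 2 u → (∀ x, u (x + L) = u x) →
      (∫ x in (0:ℝ)..L, ((u x)^2 + (deriv u x)^2 + (deriv (deriv u) x)^2)) ≤ R^2 →
      (∀ x, |u x| ≤ A) ∧ (∀ x, |deriv u x| ≤ A) := by
    intro u hu hp hb
    have hu1 : ContDiff ℝ 1 u := hu.of_le (by norm_num)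
    have hud : ContDiff ℝ 1 (deriv u) := by
      have h' : ContDiff ℝ ((1:ℕ)+1) u := by exact_mod_cast hu
      exact (contDiff_succ_iff_deriv.mp h').2.2
    have hc : Continuous u := hu.continuous
    have hd : Continuous (deriv u) := hu1.continuous_deriv le_rfl
    have hdd : Continuous (deriv (deriv u)) := hud.continuous_deriv le_rfl
    have hpd : Function.Periodic (deriv u) L := by
      intro x
      have he : (fun y => u (y + L)) = u := funext hp
      calc deriv u (x + L) = deriv (fun y => u (y + L)) x :=
            (deriv_comp_add_const u L x).symm
        _ = deriv u x := by rw [he]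
    have hItrip : IntervalIntegrable
        (fun x => (u x)^2 + (deriv u x)^2 + (deriv (deriv u) x)^2) volume 0 L :=
      (((hc.pow 2).add (hd.pow 2)).add (hdd.pow 2)).intervalIntegrable _ _
    have hIa : (∫ t in (0:ℝ)..L, ((u t)^2 + (deriv u t)^2)) ≤ R^2 := by
      refine le_trans ?_ hb
      apply intervalIntegral.integral_mono_on hL.le
        (((hc.pow 2).add (hd.pow 2)).intervalIntegrable _ _) hItrip
      intro t _; simp only [Pi.add_apply, Pi.pow_apply]; nlinarith [sq_nonneg (deriv (deriv u) t)]
    have hIb : (∫ t in (0:ℝ)..L, ((deriv u t)^2 + (deriv (deriv u) t)^2)) ≤ R^2 := by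
      refine le_trans ?_ hb
      apply intervalIntegral.integral_mono_on hL.le
        (((hd.pow 2).add (hdd.pow 2)).intervalIntegrable _ _) hItrip
      intro t _; simp only [Pi.add_apply, Pi.pow_apply]; nlinarith [sq_nonneg (u t)]
    have hfac : (0:ℝ) ≤ 1/L + 1 := by positivity
    constructor
    · intro x
      have h1 := sup_sq_bound L hL u hu1 hp x
      have h2 : (u x)^2 ≤ A^2 := by
        rw [hA2]
        exact le_trans h1 (mul_le_mul_of_nonneg_left hIa hfac)
      nlinarith [sq_abs (u x), abs_nonneg (u x)]
    · intro x
      have h1 := sup_sq_bound L hL (deriv u) hud hpd x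
      have h2 : (deriv u x)^2 ≤ A^2 := by
        rw [hA2]
        exact le_trans h1 (mul_le_mul_of_nonneg_left hIb hfac)
      nlinarith [sq_abs (deriv u x), abs_nonneg (deriv u x)]
  obtain ⟨hB1, hB1'⟩ := facts u₁ hu₁ hp₁ hb₁
  obtain ⟨hB2, hB2'⟩ := facts u₂ hu₂ hp₂ hb₂
  -- cosh Lipschitz on [-A, A]
  have hlip : ∀ a b : ℝ, |a| ≤ A → |b| ≤ A →
      |Real.cosh a - Real.cosh b| ≤ C * |a - b| := by
    intro a b ha hb
    have hbound : ∀ t ∈ Set.Icc (-A) A, ‖deriv Real.cosh t‖ ≤ C := by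
      intro t ht
      rw [Real.deriv_cosh, Real.norm_eq_abs, Real.abs_sinh]
      calc Real.sinh |t| ≤ Real.sinh A :=
            Real.sinh_le_sinh.mpr (abs_le.mpr ⟨ht.1, ht.2⟩)
        _ ≤ C := (Real.sinh_lt_cosh A).le
    have := (convex_Icc (-A) A).norm_image_sub_le_of_norm_deriv_le
      (fun t _ => Real.differentiable_cosh t) hbound
      (abs_le.mp hb |> fun h => Set.mem_Icc.mpr h)
      (abs_le.mp ha |> fun h => Set.mem_Icc.mpr h)
    simpa [Real.norm_eq_abs] using this
  -- pointwise bound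
  have hpt : ∀ x, (Real.cosh (u₁ x) * deriv u₁ x - Real.cosh (u₂ x) * deriv u₂ x)^2
      ≤ M^2 * ((u₁ x - u₂ x)^2 + (deriv u₁ x - deriv u₂ x)^2
          + (deriv (deriv u₁) x - deriv (deriv u₂) x)^2) := by
    intro x
    set a := u₁ x - u₂ x with ha'
    set b := deriv u₁ x - deriv u₂ x with hb'
    set d := Real.cosh (u₁ x) * deriv u₁ x - Real.cosh (u₂ x) * deriv u₂ x with hd'
    have hcosh1 : Real.cosh (u₁ x) ≤ C := by
      rw [hCdef]
      exact Real.cosh_le_cosh.mpr (by rw [abs_of_nonneg hA0]; exact hB1 x)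
    have hcoshpos : 0 < Real.cosh (u₁ x) := Real.cosh_pos _
    have hsplit : d = Real.cosh (u₁ x) * b + (Real.cosh (u₁ x) - Real.cosh (u₂ x)) * deriv u₂ x := by
      rw [hd', hb']; ring
    have habs : |d| ≤ C * |b| + (C * |a|) * A := by
      rw [hsplit]
      calc |Real.cosh (u₁ x) * b + (Real.cosh (u₁ x) - Real.cosh (u₂ x)) * deriv u₂ x|
          ≤ |Real.cosh (u₁ x) * b| + |(Real.cosh (u₁ x) - Real.cosh (u₂ x)) * deriv u₂ x| :=
            abs_add_le _ _
        _ = |Real.cosh (u₁ x)| * |b| + |Real.cosh (u₁ x) - Real.cosh (u₂ x)| * |deriv u₂ x| := by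
            rw [abs_mul, abs_mul]
        _ ≤ C * |b| + (C * |a|) * A := by
            apply add_le_add
            · exact mul_le_mul_of_nonneg_right
                (by rw [abs_of_pos hcoshpos]; exact hcosh1) (abs_nonneg _)
            · exact mul_le_mul (hlip _ _ (hB1 x) (hB2 x)) (hB2' x)
                (abs_nonneg _) (by positivity)
    have hds : d^2 ≤ (C * |b| + (C * |a|) * A)^2 := by
      rw [← sq_abs d]
      exact pow_le_pow_left₀ (abs_nonneg d) habs 2
    rw [hM2]
    have harith := lipschitz_arith C A (|a|) (|b|)
      ((deriv (deriv u₁) x - deriv (deriv u₂) x)^2) hC1 hA0 (abs_nonneg a)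
      (abs_nonneg b) (sq_nonneg _)
    rw [sq_abs, sq_abs] at harith
    linarith [hds, harith]
  -- continuity / integrability
  have hc1 : Continuous u₁ := hu₁.continuous
  have hc2 : Continuous u₂ := hu₂.continuous
  have hd1 : Continuous (deriv u₁) := hu₁.continuous_deriv (by norm_num)
  have hd2 : Continuous (deriv u₂) := hu₂.continuous_deriv (by norm_num)
  have hdd1 : Continuous (deriv (deriv u₁)) := by
    have h' : ContDiff ℝ ((1:ℕ)+1) u₁ := by exact_mod_cast hu₁
    exact ((contDiff_succ_iff_deriv.mp h').2.2).continuous_deriv le_rfl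
  have hdd2 : Continuous (deriv (deriv u₂)) := by
    have h' : ContDiff ℝ ((1:ℕ)+1) u₂ := by exact_mod_cast hu₂
    exact ((contDiff_succ_iff_deriv.mp h').2.2).continuous_deriv le_rfl
  have hclhs : Continuous (fun x =>
      (Real.cosh (u₁ x) * deriv u₁ x - Real.cosh (u₂ x) * deriv u₂ x)^2) :=
    (((Real.continuous_cosh.comp hc1).mul hd1).sub
      ((Real.continuous_cosh.comp hc2).mul hd2)).pow 2
  have hcrhs : Continuous (fun x => ((u₁ x - u₂ x)^2 + (deriv u₁ x - deriv u₂ x)^2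
      + (deriv (deriv u₁) x - deriv (deriv u₂) x)^2)) :=
    (((hc1.sub hc2).pow 2).add ((hd1.sub hd2).pow 2)).add ((hdd1.sub hdd2).pow 2)
  calc (∫ x in (0:ℝ)..L,
          (Real.cosh (u₁ x) * deriv u₁ x - Real.cosh (u₂ x) * deriv u₂ x)^2)
      ≤ ∫ x in (0:ℝ)..L, M^2 * ((u₁ x - u₂ x)^2 + (deriv u₁ x - deriv u₂ x)^2
          + (deriv (deriv u₁) x - deriv (deriv u₂) x)^2) := by
        apply intervalIntegral.integral_mono_on hL.le (hclhs.intervalIntegrable _ _)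
          ((continuous_const.mul hcrhs).intervalIntegrable _ _)
        intro x _; exact hpt x
    _ = M^2 * ∫ x in (0:ℝ)..L, ((u₁ x - u₂ x)^2 + (deriv u₁ x - deriv u₂ x)^2
          + (deriv (deriv u₁) x - deriv (deriv u₂) x)^2) :=
        intervalIntegral.integral_const_mul _ _
end

section
/- Let w > 0, L > 0, and let v : ℝ → ℝ be a continuously differentiable L-periodic function that is not identically zero. Then S_w(τ v) → −∞ as τ → +∞. -/
open Real MeasureTheory Filter

lemma aux_tendsto (A C K c : ℝ) (hK : 0 < K) (hc : 0 < c) :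
    Tendsto (fun τ : ℝ => A * τ ^ 2 - K * Real.exp (c * τ) + C) atTop atBot := by
  have h1 : Tendsto (fun τ : ℝ => Real.exp (c * τ) / (c * τ) ^ 2) atTop atTop :=
    (Real.tendsto_exp_div_pow_atTop 2).comp (tendsto_id.const_mul_atTop hc)
  have h2 : Tendsto (fun τ : ℝ => Real.exp (c * τ) / τ ^ 2) atTop atTop := by
    have h := h1.const_mul_atTop (show (0:ℝ) < c ^ 2 by positivity)
    refine h.congr' ?_
    filter_upwards [eventually_gt_atTop 0] with τ hτ
    have hτ0 : τ ≠ 0 := ne_of_gt hτ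
    have hc0 : c ≠ 0 := ne_of_gt hc
    field_simp
  have h3 : Tendsto (fun τ : ℝ => K * (Real.exp (c * τ) / τ ^ 2) + (-A)) atTop atTop :=
    tendsto_atTop_add_const_right _ _ (h2.const_mul_atTop hK)
  have h4 : Tendsto (fun τ : ℝ => τ ^ 2 * (K * (Real.exp (c * τ) / τ ^ 2) + (-A)) + (-C))
      atTop atTop :=
    tendsto_atTop_add_const_right _ _
      (Tendsto.atTop_mul_atTop₀ (tendsto_pow_atTop two_ne_zero) h3)
  have h5 := tendsto_neg_atTop_atBot.comp h4
  refine h5.congr' ?_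
  filter_upwards [eventually_gt_atTop 0] with τ hτ
  have hτ0 : τ ≠ 0 := ne_of_gt hτ
  simp only [Function.comp_apply]
  field_simp
  ring

/-- For any nontrivial `C¹` `L`-periodic function `v`, the action
`S_w(τv) = ∫₀^L [((τv)')²/2 − cosh(τv)/w + 1/w] dx` tends to `−∞` as `τ → +∞`. -/
theorem action_tendsto_atBot_along_rays
    (w L : ℝ) (hw : 0 < w) (hL : 0 < L) (v : ℝ → ℝ)
    (hv : ContDiff ℝ 1 v) (hper : ∀ x, v (x + L) = v x)
    (hne : ∃ x : ℝ, v x ≠ 0) :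
    Tendsto (fun τ : ℝ => ∫ x in (0:ℝ)..L,
        ((deriv (fun y => τ * v y) x)^2 / 2 - Real.cosh (τ * v x) / w + 1 / w))
      atTop atBot := by
  obtain ⟨x₀, hx₀⟩ := hne
  have hperi : Function.Periodic v L := hper
  obtain ⟨x₁, hx₁mem, hx₁eq⟩ := hperi.exists_mem_Ico₀ hL x₀
  have hvx₁ : v x₁ ≠ 0 := by rw [← hx₁eq]; exact hx₀
  set c : ℝ := |v x₁| / 2 with hc_def
  have hc : 0 < c := by positivity
  have hcont : Continuous v := hv.continuous
  -- find δ such that |v x| > c near x₁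
  have habs : ContinuousAt (fun x => |v x|) x₁ := (hcont.abs).continuousAt
  obtain ⟨δ, hδ, hδprop⟩ := Metric.continuousAt_iff.mp habs c hc
  -- the interval [a, b]
  set a : ℝ := x₁ with ha_def
  set b : ℝ := min (x₁ + δ / 2) L with hb_def
  have hab : a < b := lt_min (by linarith) hx₁mem.2
  have ha0 : 0 ≤ a := hx₁mem.1
  have hbL : b ≤ L := min_le_right _ _
  have hlow : ∀ x ∈ Set.Icc a b, c ≤ |v x| := by
    intro x hx
    have hd : dist x x₁ < δ := by
      rw [Real.dist_eq, abs_lt]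
      constructor
      · have := hx.1; simp only [ha_def] at this; linarith
      · have := hx.2; have h2 : b ≤ x₁ + δ / 2 := min_le_left _ _; linarith
    have := hδprop hd
    rw [Real.dist_eq] at this
    have := abs_lt.mp this
    have h1 : |v x₁| - c < |v x| := by linarith [this.1]
    have : |v x₁| = 2 * c := by rw [hc_def]; ring
    linarith
  -- continuity facts
  have hdcont : Continuous (deriv v) := hv.continuous_deriv le_rfl
  have hdiff : Differentiable ℝ v := hv.differentiable one_ne_zero
  set A : ℝ := ∫ x in (0:ℝ)..L, (deriv v x) ^ 2 / 2 with hA_def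
  set K : ℝ := (b - a) / (2 * w) with hK_def
  have hK : 0 < K := by apply div_pos <;> linarith
  refine tendsto_atBot_mono' atTop ?_ (aux_tendsto A (L / w) K c hK hc)
  filter_upwards [eventually_ge_atTop 0] with τ hτ
  -- rewrite the integrand
  have hder : ∀ x : ℝ, deriv (fun y => τ * v y) x = τ * deriv v x := by
    intro x
    rw [deriv_const_mul τ (hdiff x)]
  have hint_eq : (∫ x in (0:ℝ)..L,
        ((deriv (fun y => τ * v y) x)^2 / 2 - Real.cosh (τ * v x) / w + 1 / w))
      = τ ^ 2 * A - (1 / w) * (∫ x in (0:ℝ)..L, Real.cosh (τ * v x)) + L / w := by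
    have i1 : IntervalIntegrable (fun x => τ ^ 2 * ((deriv v x) ^ 2 / 2)) volume 0 L :=
      (continuous_const.mul ((hdcont.pow 2).div_const 2)).intervalIntegrable _ _
    have i2 : IntervalIntegrable (fun x => Real.cosh (τ * v x) / w) volume 0 L :=
      ((Real.continuous_cosh.comp (continuous_const.mul hcont)).div_const w).intervalIntegrable _ _
    have i3 : IntervalIntegrable (fun _ : ℝ => (1:ℝ) / w) volume 0 L :=
      intervalIntegrable_const
    rw [show (fun x => ((deriv (fun y => τ * v y) x)^2 / 2 - Real.cosh (τ * v x) / w + 1 / w))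
        = fun x => (τ ^ 2 * ((deriv v x) ^ 2 / 2) - (1 / w) * Real.cosh (τ * v x)) + 1 / w by
      funext x; rw [hder x]; ring]
    have i2' : IntervalIntegrable (fun x => (1 / w) * Real.cosh (τ * v x)) volume 0 L := by
      simpa [div_eq_inv_mul, mul_comm] using i2
    rw [intervalIntegral.integral_add (i1.sub i2') i3,
      intervalIntegral.integral_sub i1 i2', intervalIntegral.integral_const_mul,
      intervalIntegral.integral_const_mul, intervalIntegral.integral_const]
    rw [hA_def]
    simp only [smul_eq_mul]
    ring
  rw [hint_eq]
  -- lower bound for the cosh integral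
  have hcosh_int : ∀ p q : ℝ, IntervalIntegrable (fun x => Real.cosh (τ * v x)) volume p q := by
    intro p q
    exact (Real.continuous_cosh.comp (continuous_const.mul hcont)).intervalIntegrable _ _
  have h1 : (b - a) * Real.cosh (c * τ) ≤ ∫ x in a..b, Real.cosh (τ * v x) := by
    have := intervalIntegral.integral_mono_on (le_of_lt hab)
      (intervalIntegrable_const (c := Real.cosh (c * τ))) (hcosh_int a b)
      (fun x hx => by
        rw [Real.cosh_le_cosh]
        have h1 : |c * τ| = c * τ := abs_of_nonneg (by positivity)
        have h2 : |τ * v x| = τ * |v x| := by rw [abs_mul, abs_of_nonneg hτ]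
        rw [h1, h2]
        have := hlow x hx
        nlinarith)
    rwa [intervalIntegral.integral_const, smul_eq_mul] at this
  have h2 : ∫ x in a..b, Real.cosh (τ * v x) ≤ ∫ x in (0:ℝ)..L, Real.cosh (τ * v x) := by
    have e1 : (∫ x in (0:ℝ)..a, Real.cosh (τ * v x)) + (∫ x in a..b, Real.cosh (τ * v x))
        + (∫ x in b..L, Real.cosh (τ * v x)) = ∫ x in (0:ℝ)..L, Real.cosh (τ * v x) := by
      rw [intervalIntegral.integral_add_adjacent_intervals (hcosh_int 0 a) (hcosh_int a b),
        intervalIntegral.integral_add_adjacent_intervals (hcosh_int 0 b) (hcosh_int b L)]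
    have n1 : 0 ≤ ∫ x in (0:ℝ)..a, Real.cosh (τ * v x) :=
      intervalIntegral.integral_nonneg ha0 (fun x _ => le_of_lt (Real.cosh_pos _))
    have n2 : 0 ≤ ∫ x in b..L, Real.cosh (τ * v x) :=
      intervalIntegral.integral_nonneg hbL (fun x _ => le_of_lt (Real.cosh_pos _))
    linarith
  have h3 : Real.exp (c * τ) / 2 ≤ Real.cosh (c * τ) := by
    rw [Real.cosh_eq]
    have := Real.exp_pos (-(c * τ))
    linarith
  have h4 : (b - a) * (Real.exp (c * τ) / 2) ≤ ∫ x in (0:ℝ)..L, Real.cosh (τ * v x) := by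
    have : (b - a) * (Real.exp (c * τ) / 2) ≤ (b - a) * Real.cosh (c * τ) := by
      apply mul_le_mul_of_nonneg_left h3 (by linarith)
    linarith
  have hwinv : 0 < 1 / w := by positivity
  have h5 : (1 / w) * ((b - a) * (Real.exp (c * τ) / 2))
      ≤ (1 / w) * (∫ x in (0:ℝ)..L, Real.cosh (τ * v x)) :=
    mul_le_mul_of_nonneg_left h4 hwinv.le
  have hKe : (1 / w) * ((b - a) * (Real.exp (c * τ) / 2)) = K * Real.exp (c * τ) := by
    rw [hK_def]; ring
  rw [hKe] at h5
  have : τ ^ 2 * A = A * τ ^ 2 := by ring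
  linarith
end

section
/- In the setting of the previous variation-of-parameters construction, assume additionally that φ is L-periodic and odd, and that ∫₀^L y(s) ds = 0. Then p(L) = 0 = p(0) and p'(L) = 0 = p'(0), and consequently p is L-periodic: p(x + L) = p(x) for all x ∈ ℝ. -/
open Real MeasureTheory

/-- Periodicity of the variation-of-parameters solution: if moreover `φ` is
odd and `L`-periodic and `∫₀^L y = 0`, then `p(L) = 0 = p(0)`,
`p'(L) = 0 = p'(0)`, and `p` is `L`-periodic. -/
theorem variation_of_parameters_periodic
    (ω L : ℝ) (hω : 0 < ω) (hL : 0 < L) (φ y : ℝ → ℝ)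
    (hφ : ContDiff ℝ 2 φ)
    (hφode : ∀ x : ℝ, ω * deriv (deriv φ) x + Real.sinh (φ x) = 0)
    (hφodd : ∀ x : ℝ, φ (-x) = -φ x)
    (hφper : ∀ x : ℝ, φ (x + L) = φ x)
    (hφ'0 : deriv φ 0 ≠ 0)
    (hy : ContDiff ℝ 2 y)
    (hyode : ∀ x : ℝ, ω * deriv (deriv y) x + Real.cosh (φ x) * y x = 0)
    (hy0 : y 0 = 0) (hy'0 : deriv y 0 = 1 / deriv φ 0)
    (hymean : (∫ s in (0:ℝ)..L, y s) = 0)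
    (p : ℝ → ℝ)
    (hp : ∀ x : ℝ, p x = (1/ω) * ((∫ s in (0:ℝ)..x, y s) * deriv φ x - y x * φ x)) :
    (p L = 0 ∧ p 0 = 0) ∧ (deriv p L = 0 ∧ deriv p 0 = 0) ∧
      (∀ x : ℝ, p (x + L) = p x) := by
  have hωne : ω ≠ 0 := hω.ne'
  have hφ0 : φ 0 = 0 := by have := hφodd 0; simp at this; linarith
  have hφL : φ L = 0 := by have := hφper 0; rw [zero_add] at this; rw [this, hφ0]
  have h2 : ContDiff ℝ (1+1 : ℕ) φ := by norm_num; exact hφ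
  have hφsplit := (contDiff_succ_iff_deriv (n := 1)).mp (by exact_mod_cast h2)
  have dφ : Differentiable ℝ φ := hφsplit.1
  have dφ' : Differentiable ℝ (deriv φ) := hφsplit.2.2.differentiable one_ne_zero
  have cφ' : Continuous (deriv φ) := hφsplit.2.2.continuous
  have h2y : ContDiff ℝ (1+1 : ℕ) y := by norm_num; exact hy
  have hysplit := (contDiff_succ_iff_deriv (n := 1)).mp (by exact_mod_cast h2y)
  have dy : Differentiable ℝ y := hysplit.1
  have dy' : Differentiable ℝ (deriv y) := hysplit.2.2.differentiable one_ne_zero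
  have cy : Continuous y := dy.continuous
  have hφ'' : ∀ x, deriv (deriv φ) x = -(Real.sinh (φ x)) / ω := by
    intro x; have := hφode x; field_simp; linarith
  have hy'' : ∀ x, deriv (deriv y) x = -(Real.cosh (φ x) * y x) / ω := by
    intro x; have := hyode x; field_simp; linarith
  have hdφ : ∀ x, HasDerivAt φ (deriv φ x) x := fun x => (dφ x).hasDerivAt
  have hdφ' : ∀ x, HasDerivAt (deriv φ) (-(Real.sinh (φ x)) / ω) x := by
    intro x; rw [← hφ'']; exact (dφ' x).hasDerivAt
  have hdy : ∀ x, HasDerivAt y (deriv y x) x := fun x => (dy x).hasDerivAt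
  have hdy' : ∀ x, HasDerivAt (deriv y) (-(Real.cosh (φ x) * y x) / ω) x := by
    intro x; rw [← hy'']; exact (dy' x).hasDerivAt
  have dφper : ∀ x, deriv φ (x + L) = deriv φ x := by
    intro x
    have h : (fun t => φ (t + L)) = φ := funext hφper
    rw [← deriv_comp_add_const φ L x, h]
  -- Wronskian is constant
  have hW : ∀ x, y x * Real.sinh (φ x) + ω * (deriv y x * deriv φ x) = ω := by
    have key : ∀ x, HasDerivAt (fun t => y t * Real.sinh (φ t) + ω * (deriv y t * deriv φ t)) 0 x := by
      intro x
      have h1 : HasDerivAt (fun t => y t * Real.sinh (φ t))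
          (deriv y x * Real.sinh (φ x) + y x * (Real.cosh (φ x) * deriv φ x)) x :=
        (hdy x).mul ((hdφ x).sinh)
      have h2 : HasDerivAt (fun t => ω * (deriv y t * deriv φ t))
          (ω * ((-(Real.cosh (φ x) * y x) / ω) * deriv φ x + deriv y x * (-(Real.sinh (φ x)) / ω))) x :=
        ((hdy' x).mul (hdφ' x)).const_mul ω
      have := h1.add h2
      refine this.congr_deriv ?_
      field_simp
      ring
    have hconst := is_const_of_deriv_eq_zero
      (f := fun t => y t * Real.sinh (φ t) + ω * (deriv y t * deriv φ t))
      (fun x => (key x).differentiableAt)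
      (fun x => (key x).deriv)
    intro x
    have h0 := hconst x 0
    rw [hy0, hφ0, hy'0] at h0
    simp only [Real.sinh_zero, mul_zero, zero_mul, zero_add] at h0
    rw [h0]
    field_simp
  have hy'L : deriv y L = 1 / deriv φ 0 := by
    have h := hW L
    rw [hφL] at h
    simp only [Real.sinh_zero, mul_zero, zero_add] at h
    have hφ'L : deriv φ L = deriv φ 0 := by have := dφper 0; rwa [zero_add] at this
    rw [hφ'L] at h
    field_simp
    have := mul_left_cancel₀ hωne (h.trans (mul_one ω).symm)
    linarith
  set β : ℝ := y L / deriv φ 0 with hβ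
  -- bound for cosh ∘ φ
  obtain ⟨C, hC⟩ := (isCompact_Icc (a := (0:ℝ)) (b := L)).exists_bound_of_continuousOn
    (dφ.continuous.continuousOn (s := Set.Icc 0 L))
  have hBnd : ∀ t : ℝ, Real.cosh (φ t) ≤ Real.cosh C := by
    intro t
    have hper : Function.Periodic φ L := hφper
    obtain ⟨t', ht', heq⟩ := hper.exists_mem_Ico₀ hL t
    rw [heq]
    exact Real.cosh_le_cosh.2 ((hC t' ⟨ht'.1, ht'.2.le⟩).trans (le_abs_self C))
  set K : NNReal := (max 1 (Real.cosh C / ω)).toNNReal with hKdef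
  set v : ℝ → ℝ × ℝ → ℝ × ℝ := fun t z => (z.2, -(Real.cosh (φ t) / ω) * z.1) with hvdef
  have hKpos : (0:ℝ) ≤ max 1 (Real.cosh C / ω) := le_trans zero_le_one (le_max_left _ _)
  have hlip : ∀ t, LipschitzOnWith K (v t) Set.univ := by
    intro t
    apply LipschitzWith.lipschitzOnWith
    apply LipschitzWith.of_dist_le_mul
    intro z w
    rw [Prod.dist_eq]
    have hKc : (K : ℝ) = max 1 (Real.cosh C / ω) := Real.coe_toNNReal _ hKpos
    rw [hKc]
    simp only [hvdef]
    rw [Prod.dist_eq]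
    simp only [Real.dist_eq]
    have hM0 : (0:ℝ) ≤ max |z.1 - w.1| |z.2 - w.2| :=
      le_trans (abs_nonneg _) (le_max_left _ _)
    apply max_le
    · calc |z.2 - w.2| ≤ max |z.1 - w.1| |z.2 - w.2| := le_max_right _ _
        _ = 1 * max |z.1 - w.1| |z.2 - w.2| := (one_mul _).symm
        _ ≤ max 1 (Real.cosh C / ω) * max |z.1 - w.1| |z.2 - w.2| := by
            gcongr; exact le_max_left _ _
    · have e1 : -(Real.cosh (φ t) / ω) * z.1 - -(Real.cosh (φ t) / ω) * w.1
          = -(Real.cosh (φ t) / ω) * (z.1 - w.1) := by ring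
      have hc : (0:ℝ) < Real.cosh (φ t) := Real.cosh_pos (φ t)
      rw [e1, abs_mul, abs_neg, abs_of_pos (div_pos hc hω)]
      calc Real.cosh (φ t) / ω * |z.1 - w.1|
          ≤ (Real.cosh C / ω) * max |z.1 - w.1| |z.2 - w.2| := by
            gcongr
            · exact hBnd t
            · exact le_max_left _ _
        _ ≤ max 1 (Real.cosh C / ω) * max |z.1 - w.1| |z.2 - w.2| := by
            gcongr; exact le_max_right _ _
  -- the shift difference and its derivative
  set Δ : ℝ → ℝ := fun t => y (t + L) - y t - β * deriv φ t with hΔdef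
  set Δd : ℝ → ℝ := fun t => deriv y (t + L) - deriv y t + β * (Real.sinh (φ t) / ω) with hΔddef
  set F : ℝ → ℝ × ℝ := fun t => (Δ t, Δd t) with hFdef
  have hFderiv : ∀ t, HasDerivAt F (v t (F t)) t := by
    intro t
    have h1 : HasDerivAt (fun s => y (s + L)) (deriv y (t + L)) t :=
      HasDerivAt.comp_add_const t L (hdy (t + L))
    have hΔ1 : HasDerivAt Δ (Δd t) t := by
      have := (h1.sub (hdy t)).sub ((hdφ' t).const_mul β)
      refine this.congr_deriv ?_
      simp only [hΔddef]
      ring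
    have h2 : HasDerivAt (fun s => deriv y (s + L)) (-(Real.cosh (φ t) * y (t + L)) / ω) t := by
      have := HasDerivAt.comp_add_const t L (hdy' (t + L))
      rwa [hφper t] at this
    have hΔ2 : HasDerivAt Δd (-(Real.cosh (φ t) / ω) * Δ t) t := by
      have h3 : HasDerivAt (fun s => β * (Real.sinh (φ s) / ω))
          (β * (Real.cosh (φ t) * deriv φ t / ω)) t :=
        (((hdφ t).sinh).div_const ω).const_mul β
      have := (h2.sub (hdy' t)).add h3
      refine this.congr_deriv ?_
      simp only [hΔdef]
      field_simp
      ring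
    exact hΔ1.prodMk hΔ2
  have hF0 : F 0 = ((0:ℝ), (0:ℝ)) := by
    have hΔ0 : Δ 0 = 0 := by
      simp only [hΔdef, zero_add, hy0, hβ]
      field_simp
      ring
    have hΔd0 : Δd 0 = 0 := by
      simp only [hΔddef, zero_add, hy'L, hy'0, hφ0, Real.sinh_zero]
      ring
    simp [hFdef, hΔ0, hΔd0]
  have hFzero : ∀ x, F x = ((0:ℝ), (0:ℝ)) := by
    intro x
    have hR : x ∈ Set.Icc (-(|x| + 1)) (|x| + 1) :=
      ⟨by linarith [neg_abs_le x], by linarith [le_abs_self x]⟩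
    have h0mem : (0:ℝ) ∈ Set.Ioo (-(|x| + 1)) (|x| + 1) :=
      ⟨by linarith [abs_nonneg x], by linarith [abs_nonneg x]⟩
    have := ODE_solution_unique_of_mem_Icc (s := fun _ => Set.univ) (fun t _ => hlip t) h0mem
      (fun t _ => (hFderiv t).continuousAt.continuousWithinAt)
      (fun t _ => hFderiv t) (fun t _ => trivial)
      (continuousOn_const (c := ((0:ℝ),(0:ℝ))))
      (fun t _ => by
        simpa [hvdef, Prod.mk_zero_zero] using (hasDerivAt_const t ((0:ℝ),(0:ℝ))))
      (fun t _ => trivial)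
      (by simpa using hF0)
    exact this hR
  have hshift : ∀ x, y (x + L) = y x + β * deriv φ x := by
    intro x
    have := congrArg Prod.fst (hFzero x)
    simp only [hFdef, hΔdef] at this
    linarith [this]
  -- the integral shifts
  have hGper : ∀ x, (∫ s in (0:ℝ)..(x + L), y s) = (∫ s in (0:ℝ)..x, y s) + β * φ x := by
    intro x
    have hadd : (∫ s in (0:ℝ)..L, y s) + (∫ s in L..(x + L), y s) = ∫ s in (0:ℝ)..(x + L), y s :=
      intervalIntegral.integral_add_adjacent_intervals
        (cy.intervalIntegrable 0 L) (cy.intervalIntegrable L (x + L))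
    have hcomp : (∫ s in (0:ℝ)..x, y (s + L)) = ∫ s in L..(x + L), y s := by
      have := intervalIntegral.integral_comp_add_right (a := (0:ℝ)) (b := x) y L
      rwa [zero_add] at this
    have hsplit : (∫ s in (0:ℝ)..x, y (s + L)) = (∫ s in (0:ℝ)..x, y s) + β * φ x := by
      have e : (∫ s in (0:ℝ)..x, y (s + L)) = ∫ s in (0:ℝ)..x, (y s + β * deriv φ s) := by
        apply intervalIntegral.integral_congr
        intro s _
        exact hshift s
      rw [e, intervalIntegral.integral_add (cy.intervalIntegrable 0 x)
        ((cφ'.intervalIntegrable 0 x).const_mul β), intervalIntegral.integral_const_mul]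
      have hd : (∫ s in (0:ℝ)..x, deriv φ s) = φ x - φ 0 :=
        intervalIntegral.integral_deriv_eq_sub (fun t _ => dφ t) (cφ'.intervalIntegrable 0 x)
      rw [hd, hφ0]
      ring
    rw [← hadd, hymean, zero_add, ← hcomp, hsplit]
  -- derivative of p
  have hpfun : p = fun x => (1/ω) * ((∫ s in (0:ℝ)..x, y s) * deriv φ x - y x * φ x) := funext hp
  have hdp : ∀ a, HasDerivAt p ((1/ω) * ((y a * deriv φ a + (∫ s in (0:ℝ)..a, y s) * (-(Real.sinh (φ a)) / ω)) - (deriv y a * φ a + y a * deriv φ a))) a := by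
    intro a
    have hG : HasDerivAt (fun x => ∫ s in (0:ℝ)..x, y s) (y a) a :=
      intervalIntegral.integral_hasDerivAt_right (cy.intervalIntegrable 0 a)
        (cy.stronglyMeasurable.stronglyMeasurableAtFilter) cy.continuousAt
    have := ((hG.mul (hdφ' a)).sub ((hdy a).mul (hdφ a))).const_mul (1/ω)
    rw [hpfun]
    exact this
  constructor
  · constructor
    · rw [hp L, hymean, hφL]; ring
    · rw [hp 0, hy0, hφ0, intervalIntegral.integral_same]; ring
  constructor
  · constructor
    · have := (hdp L).deriv
      rw [this, hymean, hφL]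
      ring
    · have := (hdp 0).deriv
      rw [this, hy0, hφ0, intervalIntegral.integral_same]
      ring
  · intro x
    rw [hp (x + L), hp x, hGper x, hφper x, dφper x, hshift x]
    ring
end

section
/- Fix L > 0. The function ω(k) = L² / (16·K(k)²·(1−k²)) is differentiable on (0,1) with derivative ω'(k) = L²·(K(k) − E(k)) / (8·k·(1−k²)²·K(k)³), and ω'(k) > 0 for every k ∈ (0,1); in particular k ↦ ω(k) is strictly increasing on (0,1). -/
open Real MeasureTheory intervalIntegral Metric

/-- Complete elliptic integral of the first kind. -/
noncomputable def ellipticK (k : ℝ) : ℝ :=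
  ∫ θ in (0:ℝ)..(π/2), 1 / Real.sqrt (1 - k^2 * Real.sin θ^2)

/-- Complete elliptic integral of the second kind. -/
noncomputable def ellipticE (k : ℝ) : ℝ :=
  ∫ θ in (0:ℝ)..(π/2), Real.sqrt (1 - k^2 * Real.sin θ^2)

lemma aux_pos {k : ℝ} (hk : |k| < 1) (θ : ℝ) : 0 < 1 - k^2 * Real.sin θ^2 := by
  nlinarith [Real.sin_sq_le_one θ, sq_abs k, abs_nonneg k, sq_nonneg (Real.sin θ)]

lemma contK {k : ℝ} (hk : |k| < 1) :
    Continuous (fun θ : ℝ => 1 / Real.sqrt (1 - k^2 * Real.sin θ^2)) := by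
  apply Continuous.div continuous_const
  · exact (Real.continuous_sqrt.comp (by continuity))
  · intro θ
    exact ne_of_gt (Real.sqrt_pos.2 (aux_pos hk θ))

lemma contE {k : ℝ} :
    Continuous (fun θ : ℝ => Real.sqrt (1 - k^2 * Real.sin θ^2)) :=
  Real.continuous_sqrt.comp (by continuity)

noncomputable def ellipticK' (k : ℝ) : ℝ :=
  ∫ θ in (0:ℝ)..(π/2), k * Real.sin θ^2 / (Real.sqrt (1 - k^2 * Real.sin θ^2))^3

lemma contK' {k : ℝ} (hk : |k| < 1) :
    Continuous (fun θ : ℝ => k * Real.sin θ^2 / (Real.sqrt (1 - k^2 * Real.sin θ^2))^3) := by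
  apply Continuous.div (by continuity)
  · exact ((Real.continuous_sqrt.comp (by continuity)).pow 3)
  · intro θ
    exact pow_ne_zero 3 (ne_of_gt (Real.sqrt_pos.2 (aux_pos hk θ)))

lemma hasDerivAt_ellipticK_aux {k : ℝ} (hk0 : 0 < k) (hk1 : k < 1) :
    HasDerivAt ellipticK (ellipticK' k) k := by
  have hk : |k| < 1 := by rw [abs_of_pos hk0]; exact hk1
  set m : ℝ := (1 + k) / 2 with hm
  have hm1 : m < 1 := by rw [hm]; linarith
  have hm0 : 0 < m := by rw [hm]; linarith
  set ε : ℝ := (1 - k) / 2 with hε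
  have hε0 : 0 < ε := by rw [hε]; linarith
  have h1m : 0 < 1 - m^2 := by nlinarith
  set B : ℝ := m / (Real.sqrt (1 - m^2))^3 with hB
  have key : ∀ x ∈ ball k ε, |x| ≤ m := by
    intro x hx
    rw [mem_ball, Real.dist_eq] at hx
    cases' abs_lt.1 hx with h1 h2
    rw [abs_le]
    constructor <;> simp only [hm, hε] at * <;> linarith
  have hpos : ∀ (x : ℝ), |x| ≤ m → ∀ θ : ℝ, 1 - m^2 ≤ 1 - x^2 * Real.sin θ^2 := by
    intro x hx θ
    have h1 : x^2 ≤ m^2 := by nlinarith [sq_abs x, abs_nonneg x]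
    nlinarith [Real.sin_sq_le_one θ, sq_nonneg (Real.sin θ)]
  have hdiff : ∀ (θ : ℝ), ∀ x ∈ ball k ε,
      HasDerivAt (fun y : ℝ => 1 / Real.sqrt (1 - y^2 * Real.sin θ^2))
        (x * Real.sin θ^2 / (Real.sqrt (1 - x^2 * Real.sin θ^2))^3) x := by
    intro θ x hx
    have hu : 0 < 1 - x^2 * Real.sin θ^2 := lt_of_lt_of_le h1m (hpos x (key x hx) θ)
    have hsq : 0 < Real.sqrt (1 - x^2 * Real.sin θ^2) := Real.sqrt_pos.2 hu
    have h1 : HasDerivAt (fun y : ℝ => 1 - y^2 * Real.sin θ^2)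
        (-(2 * x * Real.sin θ^2)) x := by
      have := ((hasDerivAt_pow 2 x).mul_const (Real.sin θ^2)).const_sub 1
      simpa using this
    have h2 := h1.sqrt (ne_of_gt hu)
    have h3 := h2.inv (ne_of_gt hsq)
    simp only [one_div]
    refine h3.congr_deriv ?_
    symm
    have hss : Real.sqrt (1 - x^2 * Real.sin θ^2) ^ 2 = 1 - x^2 * Real.sin θ^2 :=
      Real.sq_sqrt hu.le
    field_simp
  have := (hasDerivAt_integral_of_dominated_loc_of_deriv_le (μ := volume)
    (a := (0:ℝ)) (b := π/2)
    (F := fun (x : ℝ) (θ : ℝ) => 1 / Real.sqrt (1 - x^2 * Real.sin θ^2))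
    (F' := fun (x : ℝ) (θ : ℝ) => x * Real.sin θ^2 / (Real.sqrt (1 - x^2 * Real.sin θ^2))^3)
    (bound := fun _ => B) (x₀ := k) (s := ball k ε) (ball_mem_nhds k hε0) ?_ ?_ ?_ ?_ ?_ ?_)
  · exact this.2
  · filter_upwards with x
    apply Measurable.aestronglyMeasurable
    apply Measurable.div measurable_const
    exact (Real.continuous_sqrt.comp (by continuity)).measurable
  · exact (contK hk).intervalIntegrable _ _
  · exact ((contK' hk).measurable).aestronglyMeasurable
  · filter_upwards with θ
    intro _ x hx
    have hxm := key x hx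
    have hu : 1 - m^2 ≤ 1 - x^2 * Real.sin θ^2 := hpos x hxm θ
    have hsq : Real.sqrt (1 - m^2) ≤ Real.sqrt (1 - x^2 * Real.sin θ^2) :=
      Real.sqrt_le_sqrt hu
    have hsqpos : 0 < Real.sqrt (1 - m^2) := Real.sqrt_pos.2 h1m
    rw [Real.norm_eq_abs, abs_div]
    apply div_le_div₀ (by positivity)
    · rw [abs_mul]
      calc |x| * |Real.sin θ^2| ≤ m * 1 := by
            apply mul_le_mul hxm _ (abs_nonneg _) (le_of_lt hm0)
            rw [abs_of_nonneg (sq_nonneg _)]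
            exact Real.sin_sq_le_one θ
        _ = m := mul_one m
    · positivity
    · rw [abs_of_nonneg (by positivity)]
      exact pow_le_pow_left₀ (le_of_lt hsqpos) hsq 3
  · exact intervalIntegrable_const
  · filter_upwards with θ
    intro _ x hx
    exact hdiff θ x hx

lemma ellipticK_pos {k : ℝ} (hk : |k| < 1) : 0 < ellipticK k := by
  unfold ellipticK
  apply intervalIntegral_pos_of_pos_on ((contK hk).intervalIntegrable _ _)
  · intro θ _
    have := aux_pos hk θ
    positivity
  · positivity

lemma ellipticK_sub_E_pos {k : ℝ} (hk0 : 0 < k) (hk1 : k < 1) :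
    0 < ellipticK k - ellipticE k := by
  have hk : |k| < 1 := by rw [abs_of_pos hk0]; exact hk1
  unfold ellipticK ellipticE
  rw [← intervalIntegral.integral_sub ((contK hk).intervalIntegrable _ _)
    (contE.intervalIntegrable _ _)]
  apply intervalIntegral_pos_of_pos_on
  · exact ((contK hk).sub contE).intervalIntegrable _ _
  · intro θ hθ
    have hu : 0 < 1 - k^2 * Real.sin θ^2 := aux_pos hk θ
    have hs : 0 < Real.sin θ := Real.sin_pos_of_pos_of_lt_pi hθ.1
      (lt_trans hθ.2 (by linarith [Real.pi_pos]))
    have hu1 : 1 - k^2 * Real.sin θ^2 < 1 := by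
      nlinarith [mul_pos (pow_pos hk0 2) (pow_pos hs 2)]
    have hw1 : Real.sqrt (1 - k^2 * Real.sin θ^2) < 1 := by
      have := Real.sqrt_lt_sqrt hu.le hu1
      simpa using this
    have hw0 : 0 < Real.sqrt (1 - k^2 * Real.sin θ^2) := Real.sqrt_pos.2 hu
    have : 1 < 1 / Real.sqrt (1 - k^2 * Real.sin θ^2) := by
      rw [lt_div_iff₀ hw0]; linarith
    linarith
  · positivity

lemma elliptic_identity {k : ℝ} (hk0 : 0 < k) (hk1 : k < 1) :
    ellipticE k - (1 - k^2) * ellipticK k = k * (1 - k^2) * ellipticK' k := by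
  have hk : |k| < 1 := by rw [abs_of_pos hk0]; exact hk1
  set w : ℝ → ℝ := fun θ => Real.sqrt (1 - k^2 * Real.sin θ^2) with hw
  have hwpos : ∀ θ, 0 < w θ := fun θ => Real.sqrt_pos.2 (aux_pos hk θ)
  have hwsq : ∀ θ, w θ ^ 2 = 1 - k^2 * Real.sin θ^2 :=
    fun θ => Real.sq_sqrt (aux_pos hk θ).le
  -- the derivative of θ ↦ sin θ cos θ / w θ
  set f' : ℝ → ℝ := fun θ =>
    Real.cos θ^2 / w θ - (1 - k^2) * Real.sin θ^2 / (w θ)^3 with hf'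
  have hderiv : ∀ θ : ℝ, HasDerivAt (fun θ => Real.sin θ * Real.cos θ / w θ) (f' θ) θ := by
    intro θ
    have hu : 0 < 1 - k^2 * Real.sin θ^2 := aux_pos hk θ
    have h1 : HasDerivAt (fun θ : ℝ => 1 - k^2 * Real.sin θ^2)
        (-(k^2 * (2 * Real.sin θ ^ 1 * Real.cos θ))) θ := by
      have := (((Real.hasDerivAt_sin θ).pow 2).const_mul (k^2)).const_sub 1
      simpa using this
    have h2 := h1.sqrt (ne_of_gt hu)
    have h3 := ((Real.hasDerivAt_sin θ).mul (Real.hasDerivAt_cos θ)).div h2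
      (ne_of_gt (hwpos θ))
    refine h3.congr_deriv ?_
    symm
    have hss : (Real.sqrt (1 - k ^ 2 * Real.sin θ ^ 2))^2 = 1 - k^2 * Real.sin θ^2 :=
      Real.sq_sqrt hu.le
    have hsc := Real.sin_sq_add_cos_sq θ
    have hwne : Real.sqrt (1 - k ^ 2 * Real.sin θ ^ 2) ≠ 0 :=
      ne_of_gt (Real.sqrt_pos.2 hu)
    simp only [hf', hw, Pi.mul_apply]
    field_simp
    linear_combination (Real.sin θ^2) * hss + (-(k^2 * Real.sin θ^2)) * hsc
  have hcontf' : Continuous f' := by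
    apply Continuous.sub
    · exact Continuous.div (by continuity) (Real.continuous_sqrt.comp (by continuity))
        (fun θ => ne_of_gt (hwpos θ))
    · exact Continuous.div (by continuity)
        ((Real.continuous_sqrt.comp (by continuity)).pow 3)
        (fun θ => pow_ne_zero 3 (ne_of_gt (hwpos θ)))
  have hFTC : (∫ θ in (0:ℝ)..(π/2), f' θ) = 0 := by
    rw [integral_eq_sub_of_hasDerivAt (fun θ _ => hderiv θ)
      (hcontf'.intervalIntegrable _ _)]
    simp [Real.cos_pi_div_two, Real.sin_zero]
  have hlin : ellipticE k - (1 - k^2) * ellipticK k - k * (1 - k^2) * ellipticK' k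
      = ∫ θ in (0:ℝ)..(π/2), (w θ - (1 - k^2) * (1 / w θ)
          - k * (1 - k^2) * (k * Real.sin θ^2 / (w θ)^3)) := by
    unfold ellipticE ellipticK ellipticK'
    rw [← intervalIntegral.integral_const_mul, ← intervalIntegral.integral_const_mul,
      ← intervalIntegral.integral_sub (contE.intervalIntegrable _ _)
        (((contK hk).intervalIntegrable _ _).const_mul _),
      ← intervalIntegral.integral_sub
        ((contE.intervalIntegrable _ _).sub (((contK hk).intervalIntegrable _ _).const_mul _))
        (((contK' hk).intervalIntegrable _ _).const_mul _)]
  have hcongr : (∫ θ in (0:ℝ)..(π/2), (w θ - (1 - k^2) * (1 / w θ)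
          - k * (1 - k^2) * (k * Real.sin θ^2 / (w θ)^3)))
      = ∫ θ in (0:ℝ)..(π/2), k^2 * f' θ := by
    apply intervalIntegral.integral_congr
    intro θ _
    have hss := hwsq θ
    have hsc := Real.sin_sq_add_cos_sq θ
    have hwne := ne_of_gt (hwpos θ)
    have hwne := ne_of_gt (hwpos θ)
    simp only [hf', hw] at *
    field_simp
    linear_combination (Real.sqrt (1 - k^2*Real.sin θ^2)^2) * hss
      + (-(k^2 * Real.sqrt (1 - k^2*Real.sin θ^2)^2)) * hsc
  have : ellipticE k - (1 - k^2) * ellipticK k - k * (1 - k^2) * ellipticK' k = 0 := by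
    rw [hlin, hcongr, intervalIntegral.integral_const_mul, hFTC, mul_zero]
  linarith

/-- The map `k ↦ ω(k) = L²/(16 K(k)²(1−k²))` is differentiable on `(0,1)` with
derivative `L²(K−E)/(8k(1−k²)²K³) > 0`; in particular it is strictly
increasing on `(0,1)`. -/
theorem omega_of_k_strictMono (L : ℝ) (hL : 0 < L) :
    (∀ k ∈ Set.Ioo (0:ℝ) 1,
      HasDerivAt (fun k' : ℝ => L^2 / (16 * ellipticK k'^2 * (1 - k'^2)))
        (L^2 * (ellipticK k - ellipticE k) / (8 * k * (1 - k^2)^2 * ellipticK k^3)) k ∧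
      0 < L^2 * (ellipticK k - ellipticE k) / (8 * k * (1 - k^2)^2 * ellipticK k^3)) ∧
    StrictMonoOn (fun k : ℝ => L^2 / (16 * ellipticK k^2 * (1 - k^2)))
      (Set.Ioo (0:ℝ) 1) := by
  have main : ∀ k ∈ Set.Ioo (0:ℝ) 1,
      HasDerivAt (fun k' : ℝ => L^2 / (16 * ellipticK k'^2 * (1 - k'^2)))
        (L^2 * (ellipticK k - ellipticE k) / (8 * k * (1 - k^2)^2 * ellipticK k^3)) k ∧
      0 < L^2 * (ellipticK k - ellipticE k) / (8 * k * (1 - k^2)^2 * ellipticK k^3) := by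
    intro k hk
    obtain ⟨hk0, hk1⟩ := hk
    have hka : |k| < 1 := by rw [abs_of_pos hk0]; exact hk1
    have hK0 : 0 < ellipticK k := ellipticK_pos hka
    have hKE : 0 < ellipticK k - ellipticE k := ellipticK_sub_E_pos hk0 hk1
    have h1k : 0 < 1 - k^2 := by nlinarith
    have hid := elliptic_identity hk0 hk1
    have hK := hasDerivAt_ellipticK_aux hk0 hk1
    have hD1 : HasDerivAt (fun x : ℝ => 16 * ellipticK x ^ 2)
        (16 * (2 * ellipticK k ^ 1 * ellipticK' k)) k := (hK.pow 2).const_mul 16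
    have hD2 : HasDerivAt (fun x : ℝ => 1 - x^2) (-(2 * k ^ 1)) k :=
      (hasDerivAt_pow 2 k).const_sub 1
    have hD := hD1.mul hD2
    have hDne : 16 * ellipticK k ^ 2 * (1 - k^2) ≠ 0 := by positivity
    have hq := (hasDerivAt_const k (L^2)).div hD hDne
    have hpos : 0 < L^2 * (ellipticK k - ellipticE k) / (8 * k * (1 - k^2)^2 * ellipticK k^3) := by
      apply div_pos (mul_pos (pow_pos hL 2) hKE)
      positivity
    refine ⟨?_, hpos⟩
    refine hq.congr_deriv ?_
    symm
    simp only [Pi.mul_apply]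
    have hKne : ellipticK k ≠ 0 := ne_of_gt hK0
    have hkne : k ≠ 0 := ne_of_gt hk0
    have h1kne : (1:ℝ) - k^2 ≠ 0 := ne_of_gt h1k
    field_simp
    linear_combination (-(16 * L^2)) * hid
  refine ⟨main, ?_⟩
  apply strictMonoOn_of_deriv_pos (convex_Ioo 0 1)
  · intro x hx
    exact ((main x hx).1.continuousAt.continuousWithinAt)
  · intro x hx
    rw [interior_Ioo] at hx
    rw [(main x hx).1.deriv]
    exact (main x hx).2
end

section
/- For every fixed L ∈ (0, 2π) there exists a unique k₀ = k₀(L) ∈ (0,1) such that r(k₀,L) = 0, and moreover r(k,L) < 0 for all k ∈ (0, k₀) and r(k,L) > 0 for all k ∈ (k₀, 1). -/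
open Real

/-- The stability function `r(k,L)`. -/
noncomputable def rStab (k L : ℝ) : ℝ :=
  k^2 * L^2 - 16 * (1 - k^2) * (k^2 * (ellipticK k)^2 - (ellipticK k - ellipticE k)^2)

namespace RSAux

/-- auxiliary integral `J(k) = ∫ sin²θ / √(1-k² sin²θ)`; one has `K - E = k² J`. -/
noncomputable def Jint (k : ℝ) : ℝ :=
  ∫ θ in (0:ℝ)..(π/2), Real.sin θ^2 / Real.sqrt (1 - k^2 * Real.sin θ^2)

lemma one_sub_pos {k : ℝ} (hk : k^2 < 1) (θ : ℝ) : 0 < 1 - k^2 * sin θ^2 := by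
  nlinarith [sin_sq_le_one θ, sq_nonneg k, sq_nonneg (sin θ)]

lemma one_sub_ge {k : ℝ} (θ : ℝ) : 1 - k^2 ≤ 1 - k^2 * sin θ^2 := by
  nlinarith [sin_sq_le_one θ, sq_nonneg k]

lemma sqrt_pos' {k : ℝ} (hk : k^2 < 1) (θ : ℝ) : 0 < Real.sqrt (1 - k^2 * sin θ^2) :=
  Real.sqrt_pos.mpr (one_sub_pos hk θ)

lemma cont_inner (k : ℝ) : Continuous (fun θ : ℝ => 1 - k^2 * sin θ^2) :=
  continuous_const.sub (continuous_const.mul (continuous_sin.pow 2))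

lemma cont_sqrt (k : ℝ) : Continuous (fun θ : ℝ => Real.sqrt (1 - k^2 * sin θ^2)) :=
  continuous_sqrt.comp (cont_inner k)

lemma cont_invsqrt {k : ℝ} (hk : k^2 < 1) :
    Continuous (fun θ : ℝ => 1 / Real.sqrt (1 - k^2 * sin θ^2)) :=
  continuous_const.div (cont_sqrt k) (fun θ => (sqrt_pos' hk θ).ne')

lemma cont_sinsqsqrt {k : ℝ} (hk : k^2 < 1) :
    Continuous (fun θ : ℝ => sin θ^2 / Real.sqrt (1 - k^2 * sin θ^2)) :=
  (continuous_sin.pow 2).div (cont_sqrt k) (fun θ => (sqrt_pos' hk θ).ne')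

lemma intg_invsqrt {k : ℝ} (hk : k^2 < 1) :
    IntervalIntegrable (fun θ : ℝ => 1 / Real.sqrt (1 - k^2 * sin θ^2))
      MeasureTheory.volume 0 (π/2) :=
  (cont_invsqrt hk).intervalIntegrable _ _

lemma intg_sinsqsqrt {k : ℝ} (hk : k^2 < 1) :
    IntervalIntegrable (fun θ : ℝ => sin θ^2 / Real.sqrt (1 - k^2 * sin θ^2))
      MeasureTheory.volume 0 (π/2) :=
  (cont_sinsqsqrt hk).intervalIntegrable _ _

lemma pi_half_pos : (0:ℝ) < π/2 := by positivity

/-- `K - E = k² J`. -/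
lemma KE_eq {k : ℝ} (hk : k^2 < 1) : ellipticK k - ellipticE k = k^2 * Jint k := by
  have h1 : ellipticK k - ellipticE k
      = ∫ θ in (0:ℝ)..(π/2),
          (1 / Real.sqrt (1 - k^2 * sin θ^2) - Real.sqrt (1 - k^2 * sin θ^2)) := by
    rw [ellipticK, ellipticE, intervalIntegral.integral_sub (intg_invsqrt hk)
      ((cont_sqrt k).intervalIntegrable _ _)]
  rw [h1, Jint, ← intervalIntegral.integral_const_mul]
  apply intervalIntegral.integral_congr
  intro θ _
  have hx := one_sub_pos hk θ
  have hs := sqrt_pos' hk θ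
  have hsq : Real.sqrt (1 - k^2 * sin θ^2) * Real.sqrt (1 - k^2 * sin θ^2)
      = 1 - k^2 * sin θ^2 := Real.mul_self_sqrt hx.le
  field_simp
  rw [Real.sq_sqrt hx.le]; ring

lemma K_ge {k : ℝ} (hk : k^2 < 1) : π/2 ≤ ellipticK k := by
  have h : (∫ _θ in (0:ℝ)..(π/2), (1:ℝ)) ≤ ellipticK k := by
    apply intervalIntegral.integral_mono_on pi_half_pos.le
      (intervalIntegrable_const) (intg_invsqrt hk)
    intro θ _
    rw [le_div_iff₀ (sqrt_pos' hk θ), one_mul]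
    exact Real.sqrt_le_one.mpr (by nlinarith [sq_nonneg k, sq_nonneg (sin θ)])
  simpa using h

lemma J_nonneg {k : ℝ} : 0 ≤ Jint k := by
  apply intervalIntegral.integral_nonneg pi_half_pos.le
  intro θ _
  positivity

lemma J_le_K {k : ℝ} (hk : k^2 < 1) : Jint k ≤ ellipticK k := by
  apply intervalIntegral.integral_mono_on pi_half_pos.le (intg_sinsqsqrt hk) (intg_invsqrt hk)
  intro θ _
  gcongr
  exact sin_sq_le_one θ

lemma K_le {k : ℝ} (hk : k^2 < 1) : ellipticK k ≤ (π/2) / Real.sqrt (1 - k^2) := by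
  have h : ellipticK k ≤ ∫ _θ in (0:ℝ)..(π/2), 1 / Real.sqrt (1 - k^2) := by
    apply intervalIntegral.integral_mono_on pi_half_pos.le (intg_invsqrt hk)
      intervalIntegrable_const
    intro θ _
    exact one_div_le_one_div_of_le (Real.sqrt_pos.mpr (by nlinarith))
      (Real.sqrt_le_sqrt (by nlinarith [sin_sq_le_one θ, sq_nonneg k]))
  simpa [div_eq_mul_inv] using h

lemma KJ_le {k : ℝ} (hk0 : 0 ≤ k) (hk : k^2 < 1) : ellipticK k - k * Jint k ≤ π/2 := by
  have hk1 : k < 1 := by nlinarith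
  have h1 : ellipticK k - k * Jint k
      = ∫ θ in (0:ℝ)..(π/2), (1 / Real.sqrt (1 - k^2 * sin θ^2)
          - k * (sin θ^2 / Real.sqrt (1 - k^2 * sin θ^2))) := by
    rw [ellipticK, Jint, ← intervalIntegral.integral_const_mul,
      intervalIntegral.integral_sub (intg_invsqrt hk)
        (((cont_sinsqsqrt hk).intervalIntegrable _ _).const_mul k)]
  have h2 : (∫ θ in (0:ℝ)..(π/2), (1 / Real.sqrt (1 - k^2 * sin θ^2)
          - k * (sin θ^2 / Real.sqrt (1 - k^2 * sin θ^2))))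
        ≤ ∫ _θ in (0:ℝ)..(π/2), (1:ℝ) := by
    apply intervalIntegral.integral_mono_on pi_half_pos.le
      ((intg_invsqrt hk).sub (((cont_sinsqsqrt hk).intervalIntegrable _ _).const_mul k))
      intervalIntegrable_const
    intro θ _
    have hs := sqrt_pos' hk θ
    have hx := one_sub_pos hk θ
    have hrw : 1 / Real.sqrt (1 - k^2 * sin θ^2) - k * (sin θ^2 / Real.sqrt (1 - k^2 * sin θ^2))
        = (1 - k * sin θ^2) / Real.sqrt (1 - k^2 * sin θ^2) := by
      field_simp
    rw [hrw, div_le_one hs]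
    have hnn : 0 ≤ 1 - k * sin θ^2 := by nlinarith [sin_sq_le_one θ, sq_nonneg (sin θ)]
    rw [← Real.sqrt_sq hnn]
    apply Real.sqrt_le_sqrt
    nlinarith [sin_sq_le_one θ, sq_nonneg (sin θ), mul_nonneg hk0 (sq_nonneg (sin θ))]
  rw [h1]
  calc _ ≤ _ := h2
  _ = π/2 := by simp

/-! ### The pointwise core inequality -/

lemma key1 {t1 t2 a c : ℝ} (h1 : 0 < t1) (h12 : t1 < t2) (h2 : t2 < 1)
    (ha1 : a < 1) (hc0 : 0 ≤ c) (hc1 : c < 1) :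
    (1-t2)*(1-t2*c)*(1-t1*a) < (1-t1)*(1-t1*c)*(1-t2*a) := by
  have hident : (1-t1)*(1-t1*c)*(1-t2*a) - (1-t2)*(1-t2*c)*(1-t1*a)
      = (t2-t1)*((1-a)*(1-c*(t1*t2)) + c*((1-t1)*(1-t2))) := by ring
  have ht12 : t1*t2 < 1 := by nlinarith
  have hct : c*(t1*t2) < 1 := by
    nlinarith [mul_nonneg (sub_nonneg.mpr hc1.le) (mul_nonneg h1.le (h1.trans h12).le)]
  have hp1 : 0 < (1-a)*(1-c*(t1*t2)) := by nlinarith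
  have hp2 : 0 ≤ c*((1-t1)*(1-t2)) := mul_nonneg hc0 (by nlinarith)
  nlinarith [hident, mul_pos (show (0:ℝ) < t2 - t1 by linarith) hp1,
    mul_nonneg (show (0:ℝ) ≤ t2 - t1 by linarith) hp2]

lemma core_lt {t1 t2 a b : ℝ} (h1 : 0 < t1) (h12 : t1 < t2) (h2 : t2 < 1)
    (ha0 : 0 < a) (ha1 : a < 1) (hb0 : 0 < b) (hb1 : b < 1) :
    (1-t2)*(1-t2*(a*b)) / (Real.sqrt (1-t2*a) * Real.sqrt (1-t2*b)) <
    (1-t1)*(1-t1*(a*b)) / (Real.sqrt (1-t1*a) * Real.sqrt (1-t1*b)) := by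
  have h01 : (0:ℝ) < 1 - t1 := by linarith
  have h02 : (0:ℝ) < 1 - t2 := by linarith
  have hc0 : (0:ℝ) ≤ a*b := by positivity
  have hc1 : a*b < 1 := by nlinarith
  have h1a : (0:ℝ) < 1 - t1*a := by nlinarith
  have h1b : (0:ℝ) < 1 - t1*b := by nlinarith
  have h2a : (0:ℝ) < 1 - t2*a := by nlinarith
  have h2b : (0:ℝ) < 1 - t2*b := by nlinarith
  have h1c : (0:ℝ) < 1 - t1*(a*b) := by nlinarith
  have h2c : (0:ℝ) < 1 - t2*(a*b) := by nlinarith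
  have hsq1 : (Real.sqrt (1-t1*a) * Real.sqrt (1-t1*b))^2 = (1-t1*a)*(1-t1*b) := by
    rw [mul_pow, Real.sq_sqrt h1a.le, Real.sq_sqrt h1b.le]
  have hsq2 : (Real.sqrt (1-t2*a) * Real.sqrt (1-t2*b))^2 = (1-t2*a)*(1-t2*b) := by
    rw [mul_pow, Real.sq_sqrt h2a.le, Real.sq_sqrt h2b.le]
  have hk1 : (1-t2)*(1-t2*(a*b))*(1-t1*a) < (1-t1)*(1-t1*(a*b))*(1-t2*a) :=
    key1 h1 h12 h2 ha1 hc0 hc1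
  have hk2 : (1-t2)*(1-t2*(a*b))*(1-t1*b) < (1-t1)*(1-t1*(a*b))*(1-t2*b) :=
    key1 h1 h12 h2 hb1 hc0 hc1
  have hsqlt : ((1-t2)*(1-t2*(a*b)) / (Real.sqrt (1-t2*a) * Real.sqrt (1-t2*b)))^2 <
      ((1-t1)*(1-t1*(a*b)) / (Real.sqrt (1-t1*a) * Real.sqrt (1-t1*b)))^2 := by
    rw [div_pow, div_pow, hsq1, hsq2, div_lt_div_iff₀ (by nlinarith) (by nlinarith)]
    have e1 : ((1-t2)*(1-t2*(a*b)))^2 * ((1-t1*a)*(1-t1*b))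
        = ((1-t2)*(1-t2*(a*b))*(1-t1*a)) * ((1-t2)*(1-t2*(a*b))*(1-t1*b)) := by ring
    have e2 : ((1-t1)*(1-t1*(a*b)))^2 * ((1-t2*a)*(1-t2*b))
        = ((1-t1)*(1-t1*(a*b))*(1-t2*a)) * ((1-t1)*(1-t1*(a*b))*(1-t2*b)) := by ring
    rw [e1, e2]
    exact mul_lt_mul'' hk1 hk2 (by positivity) (by positivity)
  have hpos1 : (0:ℝ) ≤ (1-t1)*(1-t1*(a*b)) / (Real.sqrt (1-t1*a) * Real.sqrt (1-t1*b)) := by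
    positivity
  exact lt_of_pow_lt_pow_left₀ 2 hpos1 hsqlt

/-! ### The double-integral representation and strict monotonicity -/

noncomputable def Hfun (k α β : ℝ) : ℝ :=
  (1-k^2)*(1-k^2*(sin α^2 * sin β^2)) /
    (Real.sqrt (1-k^2*sin α^2) * Real.sqrt (1-k^2*sin β^2))

noncomputable def Pfun (k α : ℝ) : ℝ :=
  (1-k^2) * (ellipticK k - k^2 * sin α^2 * Jint k) / Real.sqrt (1-k^2*sin α^2)

/-- The stability quotient `φ(k) = r(k,L)·k⁻² + L²`-ish function:
`φ(k) = 16(1-k²)(K² - k²J²)`. -/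
noncomputable def phi (k : ℝ) : ℝ := 16*(1-k^2)*((ellipticK k)^2 - k^2*(Jint k)^2)

lemma cont_H {k : ℝ} (hk : k^2 < 1) (α : ℝ) : Continuous (fun β => Hfun k α β) := by
  unfold Hfun
  apply Continuous.div
  · fun_prop
  · exact continuous_const.mul (cont_sqrt k)
  · intro β
    exact (mul_pos (sqrt_pos' hk α) (sqrt_pos' hk β)).ne'

lemma cont_P {k : ℝ} (hk : k^2 < 1) : Continuous (fun α => Pfun k α) := by
  unfold Pfun
  apply Continuous.div
  · fun_prop
  · exact cont_sqrt k
  · intro α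
    exact (sqrt_pos' hk α).ne'

lemma P_eq {k : ℝ} (hk : k^2 < 1) (α : ℝ) :
    (∫ β in (0:ℝ)..(π/2), Hfun k α β) = Pfun k α := by
  have hsa := sqrt_pos' hk α
  have hrw : ∀ β : ℝ, Hfun k α β
      = ((1-k^2)/Real.sqrt (1-k^2*sin α^2)) * (1 / Real.sqrt (1-k^2*sin β^2))
        - ((1-k^2)*k^2*sin α^2/Real.sqrt (1-k^2*sin α^2))
            * (sin β^2 / Real.sqrt (1-k^2*sin β^2)) := by
    intro β
    have hsb := sqrt_pos' hk β
    unfold Hfun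
    field_simp
  rw [intervalIntegral.integral_congr (fun β _ => hrw β),
    intervalIntegral.integral_sub
      (((cont_invsqrt hk).intervalIntegrable _ _).const_mul _)
      (((cont_sinsqsqrt hk).intervalIntegrable _ _).const_mul _),
    intervalIntegral.integral_const_mul, intervalIntegral.integral_const_mul]
  have e1 : (∫ β in (0:ℝ)..(π/2), 1/Real.sqrt (1-k^2*sin β^2)) = ellipticK k := rfl
  have e2 : (∫ β in (0:ℝ)..(π/2), sin β^2/Real.sqrt (1-k^2*sin β^2)) = Jint k := rfl
  rw [e1, e2]
  unfold Pfun
  field_simp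

lemma G_eq {k : ℝ} (hk : k^2 < 1) :
    (∫ α in (0:ℝ)..(π/2), Pfun k α)
      = (1-k^2)*((ellipticK k)^2 - k^2*(Jint k)^2) := by
  have hrw : ∀ α : ℝ, Pfun k α
      = ((1-k^2)*ellipticK k) * (1 / Real.sqrt (1-k^2*sin α^2))
        - ((1-k^2)*k^2*Jint k) * (sin α^2 / Real.sqrt (1-k^2*sin α^2)) := by
    intro α
    have hsa := sqrt_pos' hk α
    unfold Pfun
    field_simp
  rw [intervalIntegral.integral_congr (fun α _ => hrw α),
    intervalIntegral.integral_sub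
      (((cont_invsqrt hk).intervalIntegrable _ _).const_mul _)
      (((cont_sinsqsqrt hk).intervalIntegrable _ _).const_mul _),
    intervalIntegral.integral_const_mul, intervalIntegral.integral_const_mul]
  have e1 : (∫ α in (0:ℝ)..(π/2), 1/Real.sqrt (1-k^2*sin α^2)) = ellipticK k := rfl
  have e2 : (∫ α in (0:ℝ)..(π/2), sin α^2/Real.sqrt (1-k^2*sin α^2)) = Jint k := rfl
  rw [e1, e2]
  ring

lemma sin_sq_mem {α : ℝ} (hα : α ∈ Set.Ioo (0:ℝ) (π/2)) : sin α^2 ∈ Set.Ioo (0:ℝ) 1 := by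
  have h1 : 0 < sin α := sin_pos_of_pos_of_lt_pi hα.1 (hα.2.trans (by linarith [pi_pos]))
  have h2 : sin α < 1 := by
    have hmem1 : α ∈ Set.Icc (-(π/2)) (π/2) := ⟨by linarith [hα.1, pi_half_pos], hα.2.le⟩
    have hmem2 : π/2 ∈ Set.Icc (-(π/2)) (π/2) := ⟨by linarith [pi_half_pos], le_refl _⟩
    have := Real.strictMonoOn_sin hmem1 hmem2 hα.2
    rwa [Real.sin_pi_div_two] at this
  constructor
  · positivity
  · nlinarith

lemma H_lt {k1 k2 : ℝ} (hk1 : k1 ∈ Set.Ioo (0:ℝ) 1) (hk2 : k2 ∈ Set.Ioo (0:ℝ) 1)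
    (h12 : k1 < k2) {α β : ℝ} (hα : α ∈ Set.Ioo (0:ℝ) (π/2)) (hβ : β ∈ Set.Ioo (0:ℝ) (π/2)) :
    Hfun k2 α β < Hfun k1 α β := by
  have ha := sin_sq_mem hα
  have hb := sin_sq_mem hβ
  exact core_lt (pow_pos hk1.1 2) (by nlinarith [hk1.1, hk2.1] : k1^2 < k2^2)
    (by nlinarith [hk2.1, hk2.2] : k2^2 < 1) ha.1 ha.2 hb.1 hb.2

lemma P_lt {k1 k2 : ℝ} (hk1 : k1 ∈ Set.Ioo (0:ℝ) 1) (hk2 : k2 ∈ Set.Ioo (0:ℝ) 1)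
    (h12 : k1 < k2) {α : ℝ} (hα : α ∈ Set.Ioo (0:ℝ) (π/2)) :
    Pfun k2 α < Pfun k1 α := by
  have hs1 : k1^2 < 1 := by nlinarith [hk1.1, hk1.2]
  have hs2 : k2^2 < 1 := by nlinarith [hk2.1, hk2.2]
  rw [← P_eq hs1 α, ← P_eq hs2 α]
  have hd : IntervalIntegrable (fun β => Hfun k1 α β - Hfun k2 α β)
      MeasureTheory.volume 0 (π/2) :=
    ((cont_H hs1 α).sub (cont_H hs2 α)).intervalIntegrable _ _
  have hpos := intervalIntegral.intervalIntegral_pos_of_pos_on hd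
    (fun β hβ => sub_pos.mpr (H_lt hk1 hk2 h12 hα hβ)) pi_half_pos
  rw [intervalIntegral.integral_sub ((cont_H hs1 α).intervalIntegrable _ _)
    ((cont_H hs2 α).intervalIntegrable _ _)] at hpos
  linarith

lemma phi_strictAnti : StrictAntiOn phi (Set.Ioo (0:ℝ) 1) := by
  intro k1 hk1 k2 hk2 h12
  have hs1 : k1^2 < 1 := by nlinarith [hk1.1, hk1.2]
  have hs2 : k2^2 < 1 := by nlinarith [hk2.1, hk2.2]
  have hG : (∫ α in (0:ℝ)..(π/2), Pfun k2 α) < ∫ α in (0:ℝ)..(π/2), Pfun k1 α := by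
    have hd : IntervalIntegrable (fun α => Pfun k1 α - Pfun k2 α)
        MeasureTheory.volume 0 (π/2) :=
      ((cont_P hs1).sub (cont_P hs2)).intervalIntegrable _ _
    have hpos := intervalIntegral.intervalIntegral_pos_of_pos_on hd
      (fun α hα => sub_pos.mpr (P_lt hk1 hk2 h12 hα)) pi_half_pos
    rw [intervalIntegral.integral_sub ((cont_P hs1).intervalIntegrable _ _)
      ((cont_P hs2).intervalIntegrable _ _)] at hpos
    linarith
  rw [G_eq hs1, G_eq hs2] at hG
  unfold phi
  nlinarith [hG]

/-! ### Bounds on φ -/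

lemma phi_lower {k : ℝ} (hk : k ∈ Set.Ioo (0:ℝ) 1) : 4*π^2*(1-k^2)^2 ≤ phi k := by
  have hs : k^2 < 1 := by nlinarith [hk.1, hk.2]
  have hK := K_ge hs
  have hJ0 : (0:ℝ) ≤ Jint k := J_nonneg
  have hJK := J_le_K hs
  have h1k : (0:ℝ) < 1 - k^2 := by linarith
  have hJ2 : (Jint k)^2 ≤ (ellipticK k)^2 := by nlinarith
  have h1 : (1-k^2)*(ellipticK k)^2 ≤ (ellipticK k)^2 - k^2*(Jint k)^2 := by
    nlinarith [mul_nonneg (sq_nonneg k) (sub_nonneg.mpr hJ2)]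
  have h2 : (1-k^2)*(π/2)^2 ≤ (1-k^2)*(ellipticK k)^2 := by
    have : (π/2)^2 ≤ (ellipticK k)^2 := by nlinarith [pi_half_pos]
    nlinarith
  unfold phi
  nlinarith [h1, h2]

lemma phi_upper {k : ℝ} (hk : k ∈ Set.Ioo (0:ℝ) 1) : phi k ≤ 8*π^2*Real.sqrt (1-k^2) := by
  have hs : k^2 < 1 := by nlinarith [hk.1, hk.2]
  have h1k : (0:ℝ) < 1 - k^2 := by linarith
  set s := Real.sqrt (1-k^2) with hsdef
  have hspos : 0 < s := Real.sqrt_pos.mpr h1k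
  have hs2 : s^2 = 1 - k^2 := Real.sq_sqrt h1k.le
  have hK := K_ge hs
  have hJ0 : (0:ℝ) ≤ Jint k := J_nonneg
  have hJK := J_le_K hs
  have hKJ := KJ_le hk.1.le hs
  have hKle : ellipticK k * s ≤ π/2 := by
    have := K_le hs
    rw [div_eq_mul_inv] at this
    calc ellipticK k * s ≤ ((π/2) * s⁻¹) * s := by nlinarith
    _ = π/2 := by field_simp
  have hkJ_le : k * Jint k ≤ ellipticK k := by nlinarith [hk.1, hk.2]
  have hkJ0 : 0 ≤ k * Jint k := mul_nonneg hk.1.le hJ0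
  have e : phi k = 16*s^2*((ellipticK k - k*Jint k)*(ellipticK k + k*Jint k)) := by
    unfold phi; rw [hs2]; ring
  have b1 : (ellipticK k - k*Jint k)*(ellipticK k + k*Jint k) ≤ (π/2)*(2*ellipticK k) := by
    apply mul_le_mul hKJ (by linarith) (by linarith) (by positivity)
  have b2 : phi k ≤ 16*s^2*((π/2)*(2*ellipticK k)) := by
    rw [e]
    nlinarith [sq_nonneg s, b1]
  have e2 : 16*s^2*((π/2)*(2*ellipticK k)) = 16*π*s*(ellipticK k * s) := by ring
  have b3 : 16*π*s*(ellipticK k * s) ≤ 16*π*s*(π/2) :=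
    mul_le_mul_of_nonneg_left hKle (by positivity)
  have e3 : 16*π*s*(π/2) = 8*π^2*s := by ring
  linarith [b2, e2 ▸ b3]

/-! ### Continuity of K, J, φ on compact subintervals -/

lemma contOn_K {b : ℝ} (hb0 : 0 ≤ b) (hb1 : b < 1) :
    ContinuousOn ellipticK (Set.Icc (-b) b) := by
  have hb2 : b^2 < 1 := by nlinarith
  have hcu : Continuous (fun p : ℝ × ℝ =>
      1 / Real.sqrt (max (1-b^2) (1 - p.1^2 * sin p.2^2))) := by
    apply continuous_const.div
    · apply continuous_sqrt.comp
      apply continuous_const.max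
      fun_prop
    · intro p
      exact (Real.sqrt_pos.mpr (lt_of_lt_of_le (by linarith) (le_max_left _ _))).ne'
  have hc : Continuous (fun k : ℝ =>
      ∫ θ in (0:ℝ)..(π/2), 1 / Real.sqrt (max (1-b^2) (1 - k^2 * sin θ^2))) :=
    intervalIntegral.continuous_parametric_intervalIntegral_of_continuous'
      (μ := MeasureTheory.volume)
      (f := fun k θ => 1 / Real.sqrt (max (1-b^2) (1 - k^2 * sin θ^2))) hcu 0 (π/2)
  apply hc.continuousOn.congr
  intro k hk
  have hkb : k^2 ≤ b^2 := sq_le_sq' hk.1 hk.2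
  apply intervalIntegral.integral_congr
  intro θ _
  have h : 1 - b^2 ≤ 1 - k^2 * sin θ^2 := le_trans (by linarith) (one_sub_ge θ)
  show 1 / Real.sqrt (1 - k^2 * sin θ^2) = 1 / Real.sqrt (max (1-b^2) (1 - k^2 * sin θ^2))
  rw [max_eq_right h]

lemma contOn_J {b : ℝ} (hb0 : 0 ≤ b) (hb1 : b < 1) :
    ContinuousOn Jint (Set.Icc (-b) b) := by
  have hb2 : b^2 < 1 := by nlinarith
  have hcu : Continuous (fun p : ℝ × ℝ =>
      sin p.2^2 / Real.sqrt (max (1-b^2) (1 - p.1^2 * sin p.2^2))) := by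
    apply Continuous.div
    · fun_prop
    · apply continuous_sqrt.comp
      apply continuous_const.max
      fun_prop
    · intro p
      exact (Real.sqrt_pos.mpr (lt_of_lt_of_le (by linarith) (le_max_left _ _))).ne'
  have hc : Continuous (fun k : ℝ =>
      ∫ θ in (0:ℝ)..(π/2), sin θ^2 / Real.sqrt (max (1-b^2) (1 - k^2 * sin θ^2))) :=
    intervalIntegral.continuous_parametric_intervalIntegral_of_continuous'
      (μ := MeasureTheory.volume)
      (f := fun k θ => sin θ^2 / Real.sqrt (max (1-b^2) (1 - k^2 * sin θ^2))) hcu 0 (π/2)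
  apply hc.continuousOn.congr
  intro k hk
  have hkb : k^2 ≤ b^2 := sq_le_sq' hk.1 hk.2
  apply intervalIntegral.integral_congr
  intro θ _
  have h : 1 - b^2 ≤ 1 - k^2 * sin θ^2 := le_trans (by linarith) (one_sub_ge θ)
  show sin θ^2 / Real.sqrt (1 - k^2 * sin θ^2)
      = sin θ^2 / Real.sqrt (max (1-b^2) (1 - k^2 * sin θ^2))
  rw [max_eq_right h]

lemma contOn_phi {b : ℝ} (hb0 : 0 ≤ b) (hb1 : b < 1) :
    ContinuousOn phi (Set.Icc (-b) b) := by
  have hK := contOn_K hb0 hb1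
  have hJ := contOn_J hb0 hb1
  unfold phi
  apply ContinuousOn.mul
  · exact (continuousOn_const.mul (continuousOn_const.sub ((continuousOn_id.pow 2))))
  · exact (hK.pow 2).sub (((continuousOn_id.pow 2)).mul (hJ.pow 2))

/-! ### The identity relating `rStab` and `φ` -/

lemma rStab_eq {k : ℝ} (hk : k^2 < 1) (L : ℝ) : rStab k L = k^2 * (L^2 - phi k) := by
  unfold rStab
  rw [KE_eq hk]
  unfold phi
  ring

end RSAux

set_option maxHeartbeats 1600000 in
/-- For every `L ∈ (0,2π)` there is a unique `k₀ ∈ (0,1)` with `r(k₀,L) = 0`;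
moreover `r(k,L) < 0` for `k ∈ (0,k₀)` and `r(k,L) > 0` for `k ∈ (k₀,1)`. -/
theorem rStab_unique_sign_change (L : ℝ) (hL : L ∈ Set.Ioo (0:ℝ) (2 * π)) :
    ∃ k₀ ∈ Set.Ioo (0:ℝ) 1, rStab k₀ L = 0 ∧
      (∀ k ∈ Set.Ioo (0:ℝ) k₀, rStab k L < 0) ∧
      (∀ k ∈ Set.Ioo k₀ (1:ℝ), 0 < rStab k L) ∧
      (∀ k ∈ Set.Ioo (0:ℝ) 1, rStab k L = 0 → k = k₀) := by
  obtain ⟨hL0, hL2⟩ := hL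
  have hπ := pi_pos
  -- choice of k_lo
  have hq : (0:ℝ) < (2*π - L)/(4*π) := div_pos (by linarith) (by positivity)
  obtain ⟨klo, hklo_pos, hklo_sq⟩ : ∃ x : ℝ, 0 < x ∧ x^2 = (2*π - L)/(4*π) :=
    ⟨Real.sqrt ((2*π - L)/(4*π)), Real.sqrt_pos.mpr hq, Real.sq_sqrt hq.le⟩
  have hqlt : (2*π - L)/(4*π) < 1 := by
    rw [div_lt_one (by positivity)]; linarith
  have hklo_lt1 : klo < 1 := by nlinarith [hklo_sq, hklo_pos, hqlt]
  have hklo_mem : klo ∈ Set.Ioo (0:ℝ) 1 := ⟨hklo_pos, hklo_lt1⟩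
  have hlo : L^2 < RSAux.phi klo := by
    have h1 := RSAux.phi_lower hklo_mem
    have h5 : 2*π*(1-klo^2) = π + L/2 := by rw [hklo_sq]; field_simp; ring
    have h6 : L < 2*π*(1-klo^2) := by rw [h5]; linarith
    have h7 : L^2 < 4*π^2*(1-klo^2)^2 := by nlinarith [h6, hL0]
    linarith
  -- choice of k_hi
  have hm0 : 0 < (L^2/(8*π^2))^2 := by positivity
  have hm1 : (L^2/(8*π^2))^2 < 1 := by
    have hq2 : L^2 < 4*π^2 := by nlinarith
    have hlt : L^2/(8*π^2) < 1/2 := by rw [div_lt_iff₀ (by positivity)]; nlinarith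
    have h0 : 0 < L^2/(8*π^2) := by positivity
    nlinarith
  obtain ⟨khi, hkhi_pos, hkhi_sq⟩ : ∃ x : ℝ, 0 < x ∧ x^2 = 1 - (L^2/(8*π^2))^2/2 :=
    ⟨Real.sqrt _, Real.sqrt_pos.mpr (by linarith), Real.sq_sqrt (by linarith)⟩
  have hkhi_lt1 : khi < 1 := by nlinarith [hkhi_sq, hkhi_pos, hm0]
  have hkhi_mem : khi ∈ Set.Ioo (0:ℝ) 1 := ⟨hkhi_pos, hkhi_lt1⟩
  have hhi : RSAux.phi khi < L^2 := by
    have h1 := RSAux.phi_upper hkhi_mem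
    have h2 : (1:ℝ) - khi^2 = (L^2/(8*π^2))^2/2 := by rw [hkhi_sq]; ring
    have h3 : Real.sqrt ((L^2/(8*π^2))^2/2) < Real.sqrt ((L^2/(8*π^2))^2) :=
      Real.sqrt_lt_sqrt (by linarith) (by linarith)
    have h4 : Real.sqrt ((L^2/(8*π^2))^2) = L^2/(8*π^2) := Real.sqrt_sq (by positivity)
    have h5 : 8*π^2*Real.sqrt (1-khi^2) < 8*π^2*(L^2/(8*π^2)) := by
      rw [h2]
      exact mul_lt_mul_of_pos_left (h3.trans_eq h4) (by positivity)
    have h6 : 8*π^2*(L^2/(8*π^2)) = L^2 := by field_simp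
    linarith
  -- ordering
  have horder : klo < khi := by
    rcases lt_trichotomy klo khi with h | h | h
    · exact h
    · exfalso; rw [h] at hlo; linarith
    · exfalso
      have := RSAux.phi_strictAnti hkhi_mem hklo_mem h
      linarith
  -- IVT
  have hsub : Set.Icc klo khi ⊆ Set.Icc (-khi) khi := by
    intro x hx
    exact ⟨by linarith [hx.1, hklo_pos], hx.2⟩
  have hcont : ContinuousOn RSAux.phi (Set.Icc klo khi) :=
    (RSAux.contOn_phi hkhi_pos.le hkhi_lt1).mono hsub
  have hivt := intermediate_value_Icc' horder.le hcont
  have hmem : L^2 ∈ Set.Icc (RSAux.phi khi) (RSAux.phi klo) := ⟨hhi.le, hlo.le⟩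
  obtain ⟨k₀, hk₀Icc, hk₀⟩ := hivt hmem
  have hk₀mem : k₀ ∈ Set.Ioo (0:ℝ) 1 :=
    ⟨lt_of_lt_of_le hklo_pos hk₀Icc.1, lt_of_le_of_lt hk₀Icc.2 hkhi_lt1⟩
  have hk₀sq : k₀^2 < 1 := by nlinarith [hk₀mem.1, hk₀mem.2]
  refine ⟨k₀, hk₀mem, ?_, ?_, ?_, ?_⟩
  · rw [RSAux.rStab_eq hk₀sq, hk₀]
    ring
  · intro k hk
    have hkmem : k ∈ Set.Ioo (0:ℝ) 1 := ⟨hk.1, hk.2.trans hk₀mem.2⟩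
    have hksq : k^2 < 1 := by nlinarith [hkmem.1, hkmem.2]
    have hphi : RSAux.phi k₀ < RSAux.phi k := RSAux.phi_strictAnti hkmem hk₀mem hk.2
    rw [RSAux.rStab_eq hksq]
    have : L^2 - RSAux.phi k < 0 := by rw [← hk₀]; linarith
    exact mul_neg_of_pos_of_neg (pow_pos hkmem.1 2) this
  · intro k hk
    have hkmem : k ∈ Set.Ioo (0:ℝ) 1 := ⟨hk₀mem.1.trans hk.1, hk.2⟩
    have hksq : k^2 < 1 := by nlinarith [hkmem.1, hkmem.2]
    have hphi : RSAux.phi k < RSAux.phi k₀ := RSAux.phi_strictAnti hk₀mem hkmem hk.1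
    rw [RSAux.rStab_eq hksq]
    have hlt : 0 < L^2 - RSAux.phi k := by rw [← hk₀]; linarith
    have hk2 : 0 < k^2 := pow_pos hkmem.1 2
    exact mul_pos hk2 hlt
  · intro k hkmem hzero
    have hksq : k^2 < 1 := by nlinarith [hkmem.1, hkmem.2]
    rw [RSAux.rStab_eq hksq] at hzero
    have hk2 : k^2 ≠ 0 := (pow_pos hkmem.1 2).ne'
    have hphik : RSAux.phi k = L^2 := by
      rcases mul_eq_zero.mp hzero with h | h
      · exact absurd h hk2
      · linarith
    have : RSAux.phi k = RSAux.phi k₀ := by rw [hphik, hk₀]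
    exact RSAux.phi_strictAnti.injOn hkmem hk₀mem this
end
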